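/- arXiv:0711.4175 — 6 statements merged into one kernel-verified Lean document; each statement's English description precedes it below -/
import Mathlib

section
/- For every finite directed graph G = (V,E) and every integer s ≥ 2, the entropy of G over an alphabet of size s equals the guessing number of G over that alphabet: E(G,s) = g(G,s). -/
open Finset

/-! ## Basic setup: directed graphs, guessing games, entropy (Riis, "Graph Entropy,
Network Coding and Guessing games"). -/

/-- The set `N⁻(j)` of in-neighbours of a vertex `j` in the directed graph given by
the edge relation `E` (an edge `(i,j)` is `E i j`). -/
def inNbr {V : Type*} [Fintype V] (E : V → V → Prop) [DecidableRel E] (j : V) : Finset V :=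
  Finset.univ.filter (fun i => E i j)

/-- `p` is a probability distribution on `V → A`. -/
def IsProbDist {V A : Type*} [Fintype V] [DecidableEq V] [Fintype A] (p : (V → A) → ℝ) : Prop :=
  (∀ x, 0 ≤ p x) ∧ ∑ x : V → A, p x = 1

/-- The marginal probability, under `p`, that the coordinates in `S` agree with `y`. -/
noncomputable def marginalPMF {V A : Type*} [Fintype V] [DecidableEq V] [Fintype A] [DecidableEq A]
    (p : (V → A) → ℝ) (S : Finset V) (y : ↥S → A) : ℝ :=
  ∑ x : V → A, if ∀ i : ↥S, x i.1 = y i then p x else 0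

/-- `Hent s p S` : the base-`s` Shannon entropy of the marginal of `p` on the
coordinates in `S` (using `Real.negMulLog`, so the convention `0·log(1/0) = 0` holds). -/
noncomputable def Hent {V A : Type*} [Fintype V] [DecidableEq V] [Fintype A] [DecidableEq A]
    (s : ℕ) (p : (V → A) → ℝ) (S : Finset V) : ℝ :=
  (∑ y : ↥S → A, Real.negMulLog (marginalPMF p S y)) / Real.log s

/-- `p` satisfies the information constraints of the graph: `H(j | N⁻(j)) = 0` for every
vertex `j`, where `H(X | Y) = H(X ∪ Y) − H(Y)`. -/
def InfoConstraints {V A : Type*} [Fintype V] [DecidableEq V] [Fintype A] [DecidableEq A]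
    (E : V → V → Prop) [DecidableRel E] (s : ℕ) (p : (V → A) → ℝ) : Prop :=
  ∀ j : V, Hent s p (insert j (inNbr E j)) - Hent s p (inNbr E j) = 0

/-- The (private) entropy `E(G,s)` of the graph over an alphabet of size `s`:
the sup of `H_p(V)` over probability distributions on `A^V` (`A = Fin s`)
satisfying the information constraints of the graph. -/
noncomputable def graphEntropy {V : Type*} [Fintype V] [DecidableEq V]
    (E : V → V → Prop) [DecidableRel E] (s : ℕ) : ℝ :=
  sSup {h : ℝ | ∃ p : (V → Fin s) → ℝ,
    IsProbDist p ∧ InfoConstraints E s p ∧ h = Hent s p Finset.univ}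

/-- The general entropy `E(G) = sup_{s ≥ 2} E(G,s)`. -/
noncomputable def genEntropy {V : Type*} [Fintype V] [DecidableEq V]
    (E : V → V → Prop) [DecidableRel E] : ℝ :=
  sSup {h : ℝ | ∃ s : ℕ, 2 ≤ s ∧ h = graphEntropy E s}

/-- A guessing strategy: each vertex `j` guesses a value `g j x` which may only depend on
the values `x i` for in-neighbours `i` of `j`. -/
def IsStrategy {V A : Type*} (E : V → V → Prop) (g : V → (V → A) → A) : Prop :=
  ∀ j x y, (∀ i, E i j → x i = y i) → g j x = g j y

/-- The set of assignments at which all players guess correctly. -/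
def correctSet {V A : Type*} [Fintype V] [DecidableEq V] [Fintype A] [DecidableEq A]
    (g : V → (V → A) → A) : Finset (V → A) :=
  Finset.univ.filter (fun x => ∀ j, g j x = x j)

/-- The maximal number of assignments at which all players guess correctly,
over all guessing strategies (over the alphabet `Fin s`). -/
noncomputable def maxCorrect {V : Type*} [Fintype V] [DecidableEq V]
    (E : V → V → Prop) [DecidableRel E] (s : ℕ) : ℕ :=
  sSup {m : ℕ | ∃ g : V → (V → Fin s) → Fin s, IsStrategy E g ∧ m = (correctSet g).card}

/-- The maximal probability (with `x` uniform on `A^V`) that all players guess correctly. -/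
noncomputable def maxProb {V : Type*} [Fintype V] [DecidableEq V]
    (E : V → V → Prop) [DecidableRel E] (s : ℕ) : ℝ :=
  (maxCorrect E s : ℝ) / (s : ℝ) ^ Fintype.card V

/-- The guessing number `g(G,s)`: the unique `α` with maximal success probability
`(1/s)^(n−α)`, i.e. `α = n + log_s (maximal probability)`. -/
noncomputable def guessingNumber {V : Type*} [Fintype V] [DecidableEq V]
    (E : V → V → Prop) [DecidableRel E] (s : ℕ) : ℝ :=
  (Fintype.card V : ℝ) + Real.logb s (maxProb E s)

/-- The general guessing number `g(G) = sup_{s ≥ 2} g(G,s)`. -/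
noncomputable def genGuessing {V : Type*} [Fintype V] [DecidableEq V]
    (E : V → V → Prop) [DecidableRel E] : ℝ :=
  sSup {h : ℝ | ∃ s : ℕ, 2 ≤ s ∧ h = guessingNumber E s}

/-! ## Entropy-like functions -/

/-- An S-entropy-like function: `f ∅ = 0`, monotone and submodular (the polymatroidal
axioms, equivalently Shannon's information inequalities). -/
def SEntLike {U : Type*} [DecidableEq U] (f : Finset U → ℝ) : Prop :=
  f ∅ = 0 ∧ (∀ X Y, X ⊆ Y → f X ≤ f Y) ∧ ∀ X Y, f (X ∩ Y) + f (X ∪ Y) ≤ f X + f Y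

/-- Mutual information `I_f(X;Y|Z)` of an entropy-like function. -/
def mutI {U : Type*} [DecidableEq U] (f : Finset U → ℝ) (X Y Z : Finset U) : ℝ :=
  f (X ∪ Z) + f (Y ∪ Z) - f (X ∪ Y ∪ Z) - f Z

/-- A Zhang–Yeung entropy-like function: S-entropy-like and satisfying the ZY
non-Shannon information inequality for all `A B C D`. -/
def ZYEntLike {U : Type*} [DecidableEq U] (f : Finset U → ℝ) : Prop :=
  SEntLike f ∧ ∀ A B C D : Finset U,
    2 * mutI f C D ∅ ≤ mutI f A B ∅ + mutI f A (C ∪ D) ∅ + 3 * mutI f C D A + mutI f C D B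

/-- `f` satisfies the information constraints of the graph:
`f(N⁻(j) ∪ {j}) = f(N⁻(j))` for every vertex `j`. -/
def FConstraints {V : Type*} [Fintype V] [DecidableEq V]
    (E : V → V → Prop) [DecidableRel E] (f : Finset V → ℝ) : Prop :=
  ∀ j : V, f (insert j (inNbr E j)) = f (inNbr E j)

/-- The S-entropy `E_S(G)`: the maximal value of `f(V)` over normalized S-entropy-like
functions satisfying the information constraints of `G`. -/
noncomputable def SEnt {V : Type*} [Fintype V] [DecidableEq V]
    (E : V → V → Prop) [DecidableRel E] : ℝ :=
  sSup {h : ℝ | ∃ f : Finset V → ℝ,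
    SEntLike f ∧ (∀ j : V, f {j} ≤ 1) ∧ FConstraints E f ∧ h = f Finset.univ}

/-- The ZY-entropy `E_ZY(G)`. -/
noncomputable def ZYEnt {V : Type*} [Fintype V] [DecidableEq V]
    (E : V → V → Prop) [DecidableRel E] : ℝ :=
  sSup {h : ℝ | ∃ f : Finset V → ℝ,
    ZYEntLike f ∧ (∀ j : V, f {j} ≤ 1) ∧ FConstraints E f ∧ h = f Finset.univ}

/-! ## Acyclicity -/

/-- The subgraph induced on `S` is acyclic: no directed cycle within `S`. -/
def AcyclicOn {V : Type*} (E : V → V → Prop) (S : Finset V) : Prop :=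
  ∀ v ∈ S, ¬ Relation.TransGen (fun a b => a ∈ S ∧ b ∈ S ∧ E a b) v v

/-- The acyclic independence number: the maximal size of a vertex set inducing an
acyclic subgraph. -/
noncomputable def acycIndepNum {V : Type*} [Fintype V] (E : V → V → Prop) : ℕ :=
  sSup {k : ℕ | ∃ S : Finset V, AcyclicOn E S ∧ k = S.card}

/-! ## Index codes -/

/-- An index code protocol: a broadcast map `Φ` together with decoding functions `d j`
(depending only on the in-neighbour values and the broadcast message) recovering `x j`. -/
def IsIndexCode {V A W : Type*} (E : V → V → Prop)
    (Φ : (V → A) → W) (d : V → (V → A) → W → A) : Prop :=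
  (∀ (j : V) (x y : V → A) (w : W), (∀ i, E i j → x i = y i) → d j x w = d j y w) ∧
  ∀ (x : V → A) (j : V), d j x (Φ x) = x j

/-- The length `log_s |Φ(A^V)|` of an index code protocol. -/
noncomputable def protocolLength {V A W : Type*} [Fintype V] [DecidableEq V] [Fintype A]
    [Fintype W] [DecidableEq W] (s : ℕ) (Φ : (V → A) → W) : ℝ :=
  Real.logb s ((Finset.univ.image Φ).card)

/-- The base-`s` entropy of the broadcast message `Φ(x)` for `x` uniform on `A^V`. -/
noncomputable def protocolEntropy {V A W : Type*} [Fintype V] [DecidableEq V] [Fintype A]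
    [DecidableEq A] [Fintype W] [DecidableEq W] (s : ℕ) (Φ : (V → A) → W) : ℝ :=
  (∑ w : W, Real.negMulLog
    (((Finset.univ.filter (fun x : V → A => Φ x = w)).card : ℝ) / (s : ℝ) ^ Fintype.card V))
    / Real.log s

/-- `i(G,s)`: the minimal length of an index code for `G` over `Fin s`. -/
noncomputable def indexCodeLen {V : Type*} [Fintype V] [DecidableEq V]
    (E : V → V → Prop) [DecidableRel E] (s : ℕ) : ℝ :=
  sInf {h : ℝ | ∃ (W : Type) (iW : Fintype W) (dW : DecidableEq W)
    (Φ : (V → Fin s) → W) (d : V → (V → Fin s) → W → Fin s),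
    IsIndexCode E Φ d ∧ h = @protocolLength V (Fin s) W _ _ _ iW dW s Φ}

/-- `i_entro(G,s)`: the minimal entropy of an index code for `G` over `Fin s`. -/
noncomputable def indexCodeEntro {V : Type*} [Fintype V] [DecidableEq V]
    (E : V → V → Prop) [DecidableRel E] (s : ℕ) : ℝ :=
  sInf {h : ℝ | ∃ (W : Type) (iW : Fintype W) (dW : DecidableEq W)
    (Φ : (V → Fin s) → W) (d : V → (V → Fin s) → W → Fin s),
    IsIndexCode E Φ d ∧ h = @protocolEntropy V (Fin s) W _ _ _ _ iW dW s Φ}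

/-- The information constraints on `V ∪ {w}` (`w = none`) used to define the S/ZY-minimal
index code: `f(N⁻(j) ∪ {w} ∪ {j}) = f(N⁻(j) ∪ {w})` for each `j`, `f(V ∪ {w}) = f(V)`
and `f(V) = n`. -/
def WConstraints {V : Type*} [Fintype V] [DecidableEq V]
    (E : V → V → Prop) [DecidableRel E] (f : Finset (Option V) → ℝ) : Prop :=
  (∀ j : V, f (insert (some j) (insert none ((inNbr E j).image some)))
      = f (insert none ((inNbr E j).image some))) ∧
  f (insert none ((Finset.univ : Finset V).image some))
      = f ((Finset.univ : Finset V).image some) ∧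
  f ((Finset.univ : Finset V).image some) = (Fintype.card V : ℝ)

/-- The S-minimal index code `i_S(G)`. -/
noncomputable def iS {V : Type*} [Fintype V] [DecidableEq V]
    (E : V → V → Prop) [DecidableRel E] : ℝ :=
  sInf {h : ℝ | ∃ f : Finset (Option V) → ℝ,
    SEntLike f ∧ (∀ j : V, f {some j} ≤ 1) ∧ WConstraints E f ∧ h = f {none}}

/-- The ZY-minimal index code `i_ZY(G)`. -/
noncomputable def iZY {V : Type*} [Fintype V] [DecidableEq V]
    (E : V → V → Prop) [DecidableRel E] : ℝ :=
  sInf {h : ℝ | ∃ f : Finset (Option V) → ℝ,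
    ZYEntLike f ∧ (∀ j : V, f {some j} ≤ 1) ∧ WConstraints E f ∧ h = f {none}}

/-! ## The bidirected pentagon `C5` -/

/-- The pentagon with bidirected edges: vertices `Fin 5`, edges between cyclically
adjacent vertices. -/
def E5 : Fin 5 → Fin 5 → Prop := fun i j => (i.1 + 1) % 5 = j.1 ∨ (j.1 + 1) % 5 = i.1

instance : DecidableRel E5 := fun i j => by unfold E5; infer_instance
/-! ## Auxiliary lemmas for Statement 0 -/

section RiisAux

variable {V A : Type*} [Fintype V] [DecidableEq V] [Fintype A] [DecidableEq A]

/-- The un-normalized entropy (sum of `negMulLog` of the marginal). -/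
noncomputable def auxHS (p : (V → A) → ℝ) (S : Finset V) : ℝ :=
  ∑ y : ↥S → A, Real.negMulLog (marginalPMF p S y)

lemma auxHent_eq (s : ℕ) (p : (V → A) → ℝ) (S : Finset V) :
    Hent s p S = auxHS p S / Real.log s := rfl

lemma auxMarg_nonneg {p : (V → A) → ℝ} (hp : ∀ x, 0 ≤ p x) (S : Finset V) (y : ↥S → A) :
    0 ≤ marginalPMF p S y :=
  Finset.sum_nonneg fun x _ => by split <;> simp [hp x]

lemma auxMarg_univ (p : (V → A) → ℝ) (y : ↥(univ : Finset V) → A) :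
    marginalPMF p univ y = p (fun v => y ⟨v, mem_univ v⟩) := by
  unfold marginalPMF
  rw [Finset.sum_congr rfl (fun x _ => if_congr ?_ rfl rfl) (g := fun x =>
    if x = (fun v => y ⟨v, mem_univ v⟩) then p x else 0), Finset.sum_ite_eq']
  · simp
  · constructor
    · intro h; funext v; exact h ⟨v, mem_univ v⟩
    · intro h i; rw [h]

lemma auxHS_univ (p : (V → A) → ℝ) :
    auxHS p (univ : Finset V) = ∑ x : V → A, Real.negMulLog (p x) := by
  unfold auxHS
  exact Fintype.sum_equiv ((Equiv.subtypeUnivEquiv (fun v => mem_univ v)).arrowCongr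
    (Equiv.refl A)) _ _ (fun y => by rw [auxMarg_univ]; rfl)

end RiisAux
section RiisAux2

variable {V A : Type*} [Fintype V] [DecidableEq V] [Fintype A] [DecidableEq A]

/-- Joint fiber mass: probability that the `S`-coordinates are `z` and coordinate `j` is `a`. -/
noncomputable def auxM2 (p : (V → A) → ℝ) (j : V) (S : Finset V) (z : ↥S → A) (a : A) : ℝ :=
  ∑ x : V → A, if (∀ i : ↥S, x i.1 = z i) ∧ x j = a then p x else 0

lemma auxM2_nonneg {p : (V → A) → ℝ} (hp : ∀ x, 0 ≤ p x) (j : V) (S : Finset V)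
    (z : ↥S → A) (a : A) : 0 ≤ auxM2 p j S z a :=
  Finset.sum_nonneg fun x _ => by split <;> simp [hp x]

lemma auxMarg_eq_sum_m2 (p : (V → A) → ℝ) (j : V) (S : Finset V) (z : ↥S → A) :
    marginalPMF p S z = ∑ a : A, auxM2 p j S z a := by
  unfold marginalPMF auxM2
  rw [Finset.sum_comm]
  refine Finset.sum_congr rfl fun x _ => ?_
  by_cases h : ∀ i : ↥S, x i.1 = z i
  · simp [h]
  · rw [if_neg h]
    exact (Finset.sum_eq_zero fun a _ => if_neg (fun hc => h hc.1)).symm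

/-- The equivalence between functions on `insert j S` and pairs. -/
def auxInsEquiv (j : V) (S : Finset V) (hj : j ∉ S) : (↥(insert j S) → A) ≃ (↥S → A) × A where
  toFun y := (fun i => y ⟨i.1, mem_insert_of_mem i.2⟩, y ⟨j, mem_insert_self j S⟩)
  invFun za := fun i => if h : i.1 = j then za.2 else za.1 ⟨i.1, mem_of_mem_insert_of_ne i.2 h⟩
  left_inv y := by
    funext i
    by_cases h : i.1 = j
    · simp only [dif_pos h]; congr 1; exact Subtype.ext h.symm
    · simp only [dif_neg h]
  right_inv za := by
    refine Prod.ext ?_ ?_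
    · funext i
      have h : i.1 ≠ j := fun h => hj (h ▸ i.2)
      simp only [dif_neg h]
    · simp

lemma auxMarg_insEquiv (p : (V → A) → ℝ) (j : V) (S : Finset V) (hj : j ∉ S)
    (z : ↥S → A) (a : A) :
    marginalPMF p (insert j S) ((auxInsEquiv j S hj).symm (z, a)) = auxM2 p j S z a := by
  unfold marginalPMF auxM2
  refine Finset.sum_congr rfl fun x _ => if_congr ?_ rfl rfl
  constructor
  · intro h
    refine ⟨fun i => ?_, ?_⟩
    · have hi := h ⟨i.1, mem_insert_of_mem i.2⟩
      have hne : i.1 ≠ j := fun hh => hj (hh ▸ i.2)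
      simpa only [auxInsEquiv, Equiv.coe_fn_symm_mk, dif_neg hne] using hi
    · have hjj := h ⟨j, mem_insert_self j S⟩
      simpa only [auxInsEquiv, Equiv.coe_fn_symm_mk, dif_pos rfl, dite_true] using hjj
  · rintro ⟨h1, h2⟩ i
    show x i.1 = if h : i.1 = j then a else z ⟨i.1, mem_of_mem_insert_of_ne i.2 h⟩
    by_cases h : i.1 = j
    · rw [dif_pos h, h, h2]
    · rw [dif_neg h]; exact h1 ⟨i.1, mem_of_mem_insert_of_ne i.2 h⟩

lemma auxHS_insert (p : (V → A) → ℝ) (j : V) (S : Finset V) (hj : j ∉ S) :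
    auxHS p (insert j S) = ∑ z : ↥S → A, ∑ a : A, Real.negMulLog (auxM2 p j S z a) := by
  unfold auxHS
  rw [← Equiv.sum_comp (auxInsEquiv j S hj).symm
    (fun y => Real.negMulLog (marginalPMF p (insert j S) y)), Fintype.sum_prod_type]
  exact Finset.sum_congr rfl fun z _ => Finset.sum_congr rfl fun a _ => by
    rw [auxMarg_insEquiv]

end RiisAux2
section RiisAux3

set_option linter.unusedSectionVars false
variable {A : Type*} [Fintype A] [DecidableEq A]

lemma auxTermSum (q : A → ℝ) (c : ℝ) :
    ∑ a : A, -(q a * c) = Real.negMulLog (∑ a : A, q a) + (∑ a : A, q a) * (Real.log (∑ a : A, q a) - c) := by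
  have h : ∑ a : A, -(q a * c) = (∑ a : A, q a) * (-c) := by
    rw [Finset.sum_mul]
    exact Finset.sum_congr rfl fun a _ => by ring
  rw [h, Real.negMulLog]
  ring

lemma auxTerm_le (q : A → ℝ) (hq : ∀ a, 0 ≤ q a) (a : A) :
    -(q a * Real.log (∑ b : A, q b)) ≤ Real.negMulLog (q a) := by
  rcases eq_or_lt_of_le (hq a) with h | h
  · simp [← h]
  · have hle : q a ≤ ∑ b : A, q b := Finset.single_le_sum (fun b _ => hq b) (mem_univ a)
    have hlog := Real.log_le_log h hle
    rw [Real.negMulLog, neg_mul]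
    exact neg_le_neg (mul_le_mul_of_nonneg_left hlog (hq a))

lemma auxSumTerm (q : A → ℝ) :
    ∑ a : A, -(q a * Real.log (∑ b : A, q b)) = Real.negMulLog (∑ a : A, q a) := by
  rw [auxTermSum]; ring

lemma auxNegMulLog_sum_le (q : A → ℝ) (hq : ∀ a, 0 ≤ q a) :
    Real.negMulLog (∑ a : A, q a) ≤ ∑ a : A, Real.negMulLog (q a) := by
  rw [← auxSumTerm q]
  exact Finset.sum_le_sum fun a _ => auxTerm_le q hq a

lemma auxSum_negMulLog_of_unique (q : A → ℝ)
    (h1 : ∀ a b, q a ≠ 0 → q b ≠ 0 → a = b) :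
    ∑ a : A, Real.negMulLog (q a) = Real.negMulLog (∑ a : A, q a) := by
  by_cases h : ∃ a, q a ≠ 0
  · obtain ⟨a₀, ha₀⟩ := h
    have hz : ∀ b ∈ (univ : Finset A), b ≠ a₀ → q b = 0 := fun b _ hb =>
      by_contra fun hb0 => hb (h1 b a₀ hb0 ha₀)
    rw [Finset.sum_eq_single a₀ (fun b hb hbne => by rw [hz b hb hbne, Real.negMulLog_zero])
      (fun h => absurd (mem_univ a₀) h),
      Finset.sum_eq_single a₀ hz (fun h => absurd (mem_univ a₀) h)]
  · push_neg at h
    simp [h]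

lemma auxUnique_of_sum_negMulLog (q : A → ℝ) (hq : ∀ a, 0 ≤ q a)
    (heq : ∑ a : A, Real.negMulLog (q a) = Real.negMulLog (∑ a : A, q a)) :
    ∀ a b, q a ≠ 0 → q b ≠ 0 → a = b := by
  intro a b ha hb
  by_contra hab
  have hqa : 0 < q a := (hq a).lt_of_ne (Ne.symm ha)
  have hqb : 0 < q b := (hq b).lt_of_ne (Ne.symm hb)
  have hbe : q b ≤ ∑ c ∈ (univ : Finset A).erase a, q c :=
    Finset.single_le_sum (fun c _ => hq c) (Finset.mem_erase.2 ⟨Ne.symm hab, mem_univ b⟩)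
  have hsplit := Finset.add_sum_erase (univ : Finset A) q (mem_univ a)
  have haT : q a < ∑ c : A, q c := by linarith
  have hstrict : -(q a * Real.log (∑ c : A, q c)) < Real.negMulLog (q a) := by
    have hlog := Real.log_lt_log hqa haT
    rw [Real.negMulLog, neg_mul]
    exact neg_lt_neg (mul_lt_mul_of_pos_left hlog hqa)
  have hlt : ∑ c : A, -(q c * Real.log (∑ d : A, q d)) < ∑ c : A, Real.negMulLog (q c) :=
    Finset.sum_lt_sum (fun c _ => auxTerm_le q hq c) ⟨a, mem_univ a, hstrict⟩
  rw [auxSumTerm q, heq] at hlt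
  exact lt_irrefl _ hlt

end RiisAux3
section RiisAux4

variable {V A : Type*} [Fintype V] [DecidableEq V] [Fintype A] [DecidableEq A]

lemma auxM2_ne_zero {p : (V → A) → ℝ} (hp : ∀ x, 0 ≤ p x) {j : V} {S : Finset V}
    {z : ↥S → A} {a : A} (h : auxM2 p j S z a ≠ 0) :
    ∃ x, p x ≠ 0 ∧ (∀ i : ↥S, x i.1 = z i) ∧ x j = a := by
  by_contra hc
  push_neg at hc
  apply h
  refine Finset.sum_eq_zero fun x _ => ?_
  split_ifs with hcond
  · by_contra hx
    exact hc x hx hcond.1 hcond.2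
  · rfl

lemma auxHS_insert_eq_of_dep (p : (V → A) → ℝ) (hp : ∀ x, 0 ≤ p x) (j : V) (S : Finset V)
    (hdep : ∀ x x', p x ≠ 0 → p x' ≠ 0 → (∀ i ∈ S, x i = x' i) → x j = x' j) :
    auxHS p (insert j S) = auxHS p S := by
  by_cases hj : j ∈ S
  · rw [Finset.insert_eq_self.2 hj]
  · rw [auxHS_insert p j S hj]
    refine Finset.sum_congr rfl fun z _ => ?_
    rw [auxMarg_eq_sum_m2 p j S z]
    refine auxSum_negMulLog_of_unique _ fun a b ha hb => ?_
    obtain ⟨x, hx, hxS, hxj⟩ := auxM2_ne_zero hp ha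
    obtain ⟨x', hx', hxS', hxj'⟩ := auxM2_ne_zero hp hb
    rw [← hxj, ← hxj']
    exact hdep x x' hx hx' fun i hi => (hxS ⟨i, hi⟩).trans (hxS' ⟨i, hi⟩).symm

lemma auxDep_of_HS_insert_eq (p : (V → A) → ℝ) (hp : ∀ x, 0 ≤ p x) (j : V) (S : Finset V)
    (heq : auxHS p (insert j S) = auxHS p S) :
    ∀ x x', p x ≠ 0 → p x' ≠ 0 → (∀ i ∈ S, x i = x' i) → x j = x' j := by
  intro x x' hx hx' hagree
  by_cases hj : j ∈ S
  · exact hagree j hj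
  rw [auxHS_insert p j S hj] at heq
  unfold auxHS at heq
  simp only [auxMarg_eq_sum_m2 p j S] at heq
  have hterm : ∀ z ∈ (univ : Finset (↥S → A)),
      Real.negMulLog (∑ a : A, auxM2 p j S z a) ≤ ∑ a : A, Real.negMulLog (auxM2 p j S z a) :=
    fun z _ => auxNegMulLog_sum_le _ (auxM2_nonneg hp j S z)
  have hall := (Finset.sum_eq_sum_iff_of_le hterm).1 heq.symm
  set z : ↥S → A := fun i => x i.1 with hz
  have hzz := (hall z (mem_univ z)).symm
  have hdep := auxUnique_of_sum_negMulLog _ (auxM2_nonneg hp j S z) hzz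
  have hxm : p x ≤ auxM2 p j S z (x j) := by
    unfold auxM2
    calc p x = if (∀ i : ↥S, x i.1 = z i) ∧ x j = x j then p x else 0 :=
          (if_pos ⟨fun i => rfl, rfl⟩).symm
      _ ≤ ∑ y : V → A, if (∀ i : ↥S, y i.1 = z i) ∧ y j = x j then p y else 0 :=
          Finset.single_le_sum (f := fun y : V → A => if (∀ i : ↥S, y i.1 = z i) ∧ y j = x j then p y else 0) (fun y _ => by show (0:ℝ) ≤ if (∀ i : ↥S, y i.1 = z i) ∧ y j = x j then p y else 0; split <;> simp [hp y]) (mem_univ x)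
  have hx'm : p x' ≤ auxM2 p j S z (x' j) := by
    unfold auxM2
    calc p x' = if (∀ i : ↥S, x' i.1 = z i) ∧ x' j = x' j then p x' else 0 :=
          (if_pos ⟨fun i => (hagree i.1 i.2).symm, rfl⟩).symm
      _ ≤ ∑ y : V → A, if (∀ i : ↥S, y i.1 = z i) ∧ y j = x' j then p y else 0 :=
          Finset.single_le_sum (f := fun y : V → A => if (∀ i : ↥S, y i.1 = z i) ∧ y j = x' j then p y else 0) (fun y _ => by show (0:ℝ) ≤ if (∀ i : ↥S, y i.1 = z i) ∧ y j = x' j then p y else 0; split <;> simp [hp y]) (mem_univ x')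
  have h1 : auxM2 p j S z (x j) ≠ 0 :=
    ne_of_gt (lt_of_lt_of_le ((hp x).lt_of_ne (Ne.symm hx)) hxm)
  have h2 : auxM2 p j S z (x' j) ≠ 0 :=
    ne_of_gt (lt_of_lt_of_le ((hp x').lt_of_ne (Ne.symm hx')) hx'm)
  exact hdep _ _ h1 h2

end RiisAux4
section RiisAux5

variable {V A : Type*} [Fintype V] [DecidableEq V] [Fintype A] [DecidableEq A]

open Real in
lemma auxSum_negMulLog_le_log_card (p : (V → A) → ℝ) (hp : IsProbDist p) :
    ∑ x : V → A, Real.negMulLog (p x)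
      ≤ Real.log ((univ.filter (fun x : V → A => p x ≠ 0)).card) := by
  classical
  set t := univ.filter (fun x : V → A => p x ≠ 0) with ht
  have hmem : ∀ x ∈ t, p x ≠ 0 := fun x hx => (Finset.mem_filter.1 hx).2
  have hpos : ∀ x ∈ t, 0 < p x := fun x hx => (hp.1 x).lt_of_ne (Ne.symm (hmem x hx))
  have hsum : ∑ x ∈ t, p x = 1 := by
    rw [ht, Finset.sum_filter_ne_zero]
    exact hp.2
  have hJ := (strictConcaveOn_log_Ioi.concaveOn).le_map_sum (t := t) (w := p)
    (p := fun x => (p x)⁻¹) (fun x _ => hp.1 x) hsum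
    (fun x hx => Set.mem_Ioi.2 (inv_pos.2 (hpos x hx)))
  have h1 : ∑ x ∈ t, p x • (p x)⁻¹ = (t.card : ℝ) := by
    rw [Finset.sum_congr rfl (fun x hx => by
      rw [smul_eq_mul, mul_inv_cancel₀ (hmem x hx)]), Finset.sum_const, nsmul_eq_mul, mul_one]
  have h2 : ∑ x ∈ t, p x • Real.log (p x)⁻¹ = ∑ x ∈ t, Real.negMulLog (p x) := by
    refine Finset.sum_congr rfl fun x _ => ?_
    rw [smul_eq_mul, Real.log_inv, Real.negMulLog]
    ring
  rw [h1, h2] at hJ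
  have h3 : ∑ x : V → A, Real.negMulLog (p x) = ∑ x ∈ t, Real.negMulLog (p x) := by
    refine (Finset.sum_subset (Finset.subset_univ t) fun x _ hxt => ?_).symm
    have : p x = 0 := by
      by_contra hc
      exact hxt (Finset.mem_filter.2 ⟨mem_univ x, hc⟩)
    rw [this, Real.negMulLog_zero]
  rw [h3]
  exact hJ

/-- The uniform distribution on a finite set of assignments. -/
noncomputable def auxUnif (C : Finset (V → A)) : (V → A) → ℝ :=
  fun x => if x ∈ C then (C.card : ℝ)⁻¹ else 0

lemma auxUnif_nonneg (C : Finset (V → A)) : ∀ x, 0 ≤ auxUnif C x := fun x => by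
  unfold auxUnif; split <;> positivity

lemma auxUnif_isProbDist (C : Finset (V → A)) (hC : C.Nonempty) : IsProbDist (auxUnif C) := by
  refine ⟨auxUnif_nonneg C, ?_⟩
  unfold auxUnif
  rw [Finset.sum_ite_mem, univ_inter, Finset.sum_const, nsmul_eq_mul,
    mul_inv_cancel₀ (by exact_mod_cast Finset.card_ne_zero.2 hC)]

lemma auxUnif_ne_zero_iff (C : Finset (V → A)) (hC : C.Nonempty) (x : V → A) :
    auxUnif C x ≠ 0 ↔ x ∈ C := by
  unfold auxUnif
  have h : ((C.card : ℝ))⁻¹ ≠ 0 := by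
    exact inv_ne_zero (by exact_mod_cast Finset.card_ne_zero.2 hC)
  split_ifs with hx <;> simp [hx, h]

lemma auxHS_unif_univ (C : Finset (V → A)) (hC : C.Nonempty) :
    auxHS (auxUnif C) (univ : Finset V) = Real.log (C.card) := by
  rw [auxHS_univ]
  unfold auxUnif
  have h : ∀ x : V → A, Real.negMulLog (if x ∈ C then (C.card : ℝ)⁻¹ else 0)
      = if x ∈ C then Real.negMulLog ((C.card : ℝ)⁻¹) else 0 := fun x => by
    split <;> simp
  rw [Finset.sum_congr rfl fun x _ => h x, Finset.sum_ite_mem, univ_inter, Finset.sum_const,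
    nsmul_eq_mul]
  have hcard : (0 : ℝ) < C.card := by exact_mod_cast Finset.card_pos.2 hC
  rw [Real.negMulLog, Real.log_inv]
  field_simp

end RiisAux5
section RiisAux6

set_option linter.unusedSectionVars false

variable {V A : Type*} [Fintype V] [DecidableEq V] [Fintype A] [DecidableEq A]

lemma auxHS_eq_of_hent_sub (s : ℕ) (hs : 2 ≤ s) {p : (V → A) → ℝ} {X Y : Finset V}
    (h : Hent s p X - Hent s p Y = 0) : auxHS p X = auxHS p Y := by
  have hs1 : (1 : ℝ) < s := by exact_mod_cast Nat.lt_of_lt_of_le one_lt_two hs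
  have hL : Real.log s ≠ 0 := ne_of_gt (Real.log_pos hs1)
  rw [auxHent_eq, auxHent_eq, div_sub_div_same, div_eq_zero_iff] at h
  rcases h with h | h
  · exact sub_eq_zero.1 h
  · exact absurd h hL

/-- A canonical guess for vertex `j` given the in-neighbour pattern `z`. -/
noncomputable def auxChoice [Nonempty A] (p : (V → A) → ℝ) (j : V) (N : Finset V)
    (z : ↥N → A) : A :=
  if h : ∃ x', p x' ≠ 0 ∧ ∀ i : ↥N, x' i.1 = z i then h.choose j else Classical.arbitrary A

lemma auxChoice_spec [Nonempty A] (p : (V → A) → ℝ) (j : V) (N : Finset V) (x : V → A)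
    (hx : p x ≠ 0)
    (hdep : ∀ y y', p y ≠ 0 → p y' ≠ 0 → (∀ i ∈ N, y i = y' i) → y j = y' j) :
    auxChoice p j N (fun i => x i.1) = x j := by
  unfold auxChoice
  have hP : ∃ x', p x' ≠ 0 ∧ ∀ i : ↥N, x' i.1 = (fun i : ↥N => x i.1) i := ⟨x, hx, fun i => rfl⟩
  rw [dif_pos hP]
  obtain ⟨hc1, hc2⟩ := hP.choose_spec
  exact hdep _ x hc1 hx fun i hi => hc2 ⟨i, hi⟩

end RiisAux6
/-- For every finite directed graph `G` and every integer `s ≥ 2`,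
the entropy of `G` over an alphabet of size `s` equals the guessing number:
`E(G,s) = g(G,s)`. -/
theorem graphEntropy_eq_guessingNumber {V : Type} [Fintype V] [DecidableEq V]
    (E : V → V → Prop) [DecidableRel E] (s : ℕ) (hs : 2 ≤ s) :
    graphEntropy E s = guessingNumber E s := by
  classical
  haveI : Nonempty (Fin s) := ⟨⟨0, by omega⟩⟩
  have hs1 : (1 : ℝ) < s := by exact_mod_cast Nat.lt_of_lt_of_le one_lt_two hs
  have hlogs : 0 < Real.log s := Real.log_pos hs1
  -- facts about maxCorrect
  set M : Set ℕ := {m | ∃ g : V → (V → Fin s) → Fin s,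
    IsStrategy E g ∧ m = (correctSet g).card} with hM
  have hmc : maxCorrect E s = sSup M := rfl
  have hMbdd : BddAbove M := ⟨Fintype.card (V → Fin s), fun m hm => by
    obtain ⟨g, _, rfl⟩ := hm; exact Finset.card_le_univ _⟩
  have hg0 : IsStrategy E (fun _ _ => Classical.arbitrary (Fin s)) := fun j x y h => rfl
  have hMne : M.Nonempty := ⟨_, ⟨_, hg0, rfl⟩⟩
  obtain ⟨gopt, hgopt, hcard⟩ : maxCorrect E s ∈ M := hmc ▸ Nat.sSup_mem hMne hMbdd
  have hx0 : (fun _ : V => Classical.arbitrary (Fin s)) ∈ correctSet (fun _ _ => Classical.arbitrary (Fin s)) := by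
    simp [correctSet]
  have h1le : 1 ≤ maxCorrect E s := by
    calc 1 ≤ (correctSet (fun _ _ => Classical.arbitrary (Fin s))).card := Finset.card_pos.2 ⟨_, hx0⟩
      _ ≤ maxCorrect E s := hmc ▸ le_csSup hMbdd ⟨_, hg0, rfl⟩
  have hmpos : (0 : ℝ) < (maxCorrect E s : ℝ) := by exact_mod_cast h1le
  set L : ℝ := Real.logb s (maxCorrect E s) with hL
  have hLnonneg : 0 ≤ L := Real.logb_nonneg hs1 (by exact_mod_cast h1le)
  -- guessing number equals `L`
  have hguess : guessingNumber E s = L := by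
    unfold guessingNumber maxProb
    rw [Real.logb_div (ne_of_gt hmpos) (by positivity), Real.logb_pow,
      Real.logb_self_eq_one hs1]
    ring
  -- the entropy set
  set ES : Set ℝ := {h : ℝ | ∃ p : (V → Fin s) → ℝ,
    IsProbDist p ∧ InfoConstraints E s p ∧ h = Hent s p Finset.univ} with hES
  have hge : graphEntropy E s = sSup ES := rfl
  -- upper bound
  have hupper : ∀ h ∈ ES, h ≤ L := by
    rintro h ⟨p, hp, hic, rfl⟩
    have hdep : ∀ j, ∀ y y', p y ≠ 0 → p y' ≠ 0 →
        (∀ i ∈ inNbr E j, y i = y' i) → y j = y' j :=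
      fun j => auxDep_of_HS_insert_eq p hp.1 j (inNbr E j)
        (auxHS_eq_of_hent_sub s hs (hic j))
    set gp : V → (V → Fin s) → Fin s :=
      fun j x => auxChoice p j (inNbr E j) (fun i => x i.1) with hgp
    have hstrat : IsStrategy E gp := by
      intro j x y hxy
      show auxChoice p j (inNbr E j) (fun i => x i.1)
        = auxChoice p j (inNbr E j) (fun i => y i.1)
      congr 1
      funext i
      exact hxy i.1 ((Finset.mem_filter.1 i.2).2)
    set t := univ.filter (fun x : V → Fin s => p x ≠ 0) with ht
    have hsub : t ⊆ correctSet gp := by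
      intro x hx
      rw [correctSet, Finset.mem_filter]
      exact ⟨mem_univ x, fun j =>
        auxChoice_spec p j (inNbr E j) x (Finset.mem_filter.1 hx).2 (hdep j)⟩
    have htpos : 0 < t.card := by
      refine Finset.card_pos.2 ?_
      by_contra hc
      rw [Finset.not_nonempty_iff_eq_empty] at hc
      have hzero : ∑ x : V → Fin s, p x = 0 := Finset.sum_eq_zero fun x _ => by
        by_contra hpx
        exact (Finset.eq_empty_iff_forall_notMem.1 hc x)
          (Finset.mem_filter.2 ⟨mem_univ x, hpx⟩)
      rw [hp.2] at hzero
      norm_num at hzero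
    have hcc : t.card ≤ maxCorrect E s :=
      le_trans (Finset.card_le_card hsub) (hmc ▸ le_csSup hMbdd ⟨gp, hstrat, rfl⟩)
    calc Hent s p Finset.univ = auxHS p univ / Real.log s := auxHent_eq s p univ
      _ = (∑ x : V → Fin s, Real.negMulLog (p x)) / Real.log s := by rw [auxHS_univ]
      _ ≤ Real.log t.card / Real.log s :=
          (div_le_div_iff_of_pos_right hlogs).2 (auxSum_negMulLog_le_log_card p hp)
      _ = Real.logb s t.card := Real.log_div_log
      _ ≤ L := Real.logb_le_logb_of_le hs1 (by exact_mod_cast htpos) (by exact_mod_cast hcc)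
  -- lower bound : L is attained
  have hCne : (correctSet gopt).Nonempty := Finset.card_pos.1 (by omega)
  have hdepC : ∀ j, ∀ y y', auxUnif (correctSet gopt) y ≠ 0 →
      auxUnif (correctSet gopt) y' ≠ 0 → (∀ i ∈ inNbr E j, y i = y' i) → y j = y' j := by
    intro j y y' hy hy' hagree
    have hyC := (auxUnif_ne_zero_iff _ hCne y).1 hy
    have hy'C := (auxUnif_ne_zero_iff _ hCne y').1 hy'
    have h1 : gopt j y = y j := (Finset.mem_filter.1 hyC).2 j
    have h2 : gopt j y' = y' j := (Finset.mem_filter.1 hy'C).2 j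
    rw [← h1, ← h2]
    exact hgopt j y y' fun i hij => hagree i (Finset.mem_filter.2 ⟨mem_univ i, hij⟩)
  have hicU : InfoConstraints E s (auxUnif (correctSet gopt)) := by
    intro j
    rw [auxHent_eq, auxHent_eq,
      auxHS_insert_eq_of_dep _ (auxUnif_nonneg _) j _ (hdepC j), sub_self]
  have hmemL : L ∈ ES := by
    refine ⟨auxUnif (correctSet gopt), auxUnif_isProbDist _ hCne, hicU, ?_⟩
    rw [auxHent_eq, auxHS_unif_univ _ hCne, ← hcard, Real.log_div_log]
  have hbdd : BddAbove ES := ⟨L, fun h hh => hupper h hh⟩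
  rw [hge, hguess]
  exact le_antisymm (Real.sSup_le hupper hLnonneg) (le_csSup hbdd hmemL)
end

section
/- If 𝒢 = (g_j)_{j∈V} is a guessing strategy on a finite directed graph G over an alphabet A of size s whose set C ⊆ A^V of fixpoints (points where all players guess correctly) is nonempty, then the uniform probability distribution on C satisfies the information constraints of G and has H(V) = log_s |C|. Consequently g(G,s) ≤ E(G,s). -/
open Finset

section AuxLemmas
set_option linter.unusedSectionVars false

variable {V : Type} [Fintype V] [DecidableEq V] {s : ℕ}

private lemma marg_unif (C : Finset (V → Fin s)) (S : Finset V) (y : ↥S → Fin s) :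
    marginalPMF (fun x => if x ∈ C then ((C.card : ℝ))⁻¹ else 0) S y
      = ((C.filter (fun x => ∀ i : ↥S, x i.1 = y i)).card : ℝ) * ((C.card : ℝ))⁻¹ := by
  classical
  unfold marginalPMF
  rw [Finset.sum_congr rfl (fun x _ =>
    show _ = if x ∈ C.filter (fun x => ∀ i : ↥S, x i.1 = y i) then ((C.card : ℝ))⁻¹ else 0 from by
      simp only [Subtype.forall]
      by_cases h1 : ∀ (a : V) (b : a ∈ S), x a = y ⟨a, b⟩ <;> by_cases h2 : x ∈ C <;>
        simp [h1, h2])]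
  rw [Finset.sum_ite_mem, Finset.univ_inter, Finset.sum_const, nsmul_eq_mul]

private lemma count_partition (C : Finset (V → Fin s)) (S : Finset V) :
    ∑ y : ↥S → Fin s, ((C.filter (fun x => ∀ i : ↥S, x i.1 = y i)).card) = C.card := by
  classical
  rw [Finset.card_eq_sum_card_fiberwise
    (f := fun x (i : ↥S) => x i.1) (t := Finset.univ) (fun x _ => Finset.mem_univ _)]
  refine Finset.sum_congr rfl fun y _ => ?_
  congr 1
  apply Finset.filter_congr
  intro x _
  simp [funext_iff]

end AuxLemmas
section AuxLemmas2
set_option linter.unusedSectionVars false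
set_option maxHeartbeats 800000

variable {V : Type} [Fintype V] [DecidableEq V] {s : ℕ}

private lemma sum_negMulLog_insert (C : Finset (V → Fin s))
    (g : V → (V → Fin s) → Fin s) (hgC : ∀ x ∈ C, ∀ j, g j x = x j)
    (E : V → V → Prop) [DecidableRel E] (hg : IsStrategy E g) (j : V)
    (hj : j ∉ inNbr E j) :
    ∑ y : ↥(insert j (inNbr E j)) → Fin s,
        Real.negMulLog
          (((C.filter (fun x => ∀ i : ↥(insert j (inNbr E j)), x i.1 = y i)).card : ℝ)
            * ((C.card : ℝ))⁻¹)
      = ∑ z : ↥(inNbr E j) → Fin s,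
        Real.negMulLog
          (((C.filter (fun x => ∀ i : ↥(inNbr E j), x i.1 = z i)).card : ℝ)
            * ((C.card : ℝ))⁻¹) := by
  classical
  set Nb := inNbr E j with hNb
  set T := insert j Nb with hT
  let e : ((↥Nb → Fin s) × Fin s) ≃ (↥T → Fin s) :=
  { toFun := fun q i =>
      if h : i.1 = j then q.2 else q.1 ⟨i.1, (Finset.mem_insert.1 i.2).resolve_left h⟩
    invFun := fun y =>
      (fun i => y ⟨i.1, Finset.mem_insert_of_mem i.2⟩, y ⟨j, Finset.mem_insert_self j Nb⟩)
    left_inv := by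
      rintro ⟨z, a⟩
      simp only [Prod.mk.injEq]
      constructor
      · funext i
        rw [dif_neg (fun hi : i.1 = j => hj (hi ▸ i.2))]
      · simp
    right_inv := by
      intro y; funext i
      dsimp only
      by_cases h : i.1 = j
      · rw [dif_pos h]; exact congrArg y (Subtype.ext h.symm)
      · rw [dif_neg h] }
  have key : ∀ (z : ↥Nb → Fin s) (a : Fin s),
      C.filter (fun x => ∀ i : ↥T, x i.1 = e (z, a) i)
        = (C.filter (fun x => ∀ i : ↥Nb, x i.1 = z i)).filter (fun x => x j = a) := by
    intro z a
    ext x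
    simp only [Finset.mem_filter]
    constructor
    · intro ⟨hxC, h⟩
      refine ⟨⟨hxC, fun i => ?_⟩, ?_⟩
      · have h2 := h ⟨i.1, Finset.mem_insert_of_mem i.2⟩
        simp only [e, Equiv.coe_fn_mk] at h2
        rwa [dif_neg (fun hi : i.1 = j => hj (hi ▸ i.2))] at h2
      · have h2 := h ⟨j, Finset.mem_insert_self j Nb⟩
        simp only [e, Equiv.coe_fn_mk] at h2
        simpa using h2
    · intro ⟨⟨hxC, h1⟩, h2⟩
      refine ⟨hxC, fun i => ?_⟩
      simp only [e, Equiv.coe_fn_mk]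
      by_cases hij : i.1 = j
      · rw [dif_pos hij, hij]; exact h2
      · rw [dif_neg hij]
        exact h1 ⟨i.1, (Finset.mem_insert.1 i.2).resolve_left hij⟩
  rw [← Fintype.sum_equiv e
    (fun q => Real.negMulLog
      (((C.filter (fun x => ∀ i : ↥T, x i.1 = e q i)).card : ℝ) * ((C.card : ℝ))⁻¹))
    _ (fun q => rfl)]
  rw [Fintype.sum_prod_type]
  refine Finset.sum_congr rfl fun z _ => ?_
  simp only [key]
  set Cz := C.filter (fun x => ∀ i : ↥Nb, x i.1 = z i) with hCz
  rcases Cz.eq_empty_or_nonempty with hE | ⟨x₀, hx₀⟩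
  · simp [hE]
  · have hsame : ∀ x ∈ Cz, x j = x₀ j := by
      intro x hx
      have hxC := (Finset.mem_filter.1 hx).1
      have hx₀C := (Finset.mem_filter.1 hx₀).1
      have hgj := hg j x x₀ (fun i hEij => by
        have hiNb : i ∈ Nb := by simp [hNb, inNbr, hEij]
        rw [(Finset.mem_filter.1 hx).2 ⟨i, hiNb⟩, (Finset.mem_filter.1 hx₀).2 ⟨i, hiNb⟩])
      rw [← hgC x hxC j, ← hgC x₀ hx₀C j, hgj]
    rw [Finset.sum_eq_single (x₀ j)]
    · rw [Finset.filter_true_of_mem hsame]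
    · intro a _ ha
      have hemp : Cz.filter (fun x => x j = a) = ∅ :=
        Finset.filter_eq_empty_iff.2 (fun x hx h => ha (by rw [← h]; exact hsame x hx))
      simp [hemp]
    · simp

end AuxLemmas2
section AuxLemmas3
set_option linter.unusedSectionVars false
set_option maxHeartbeats 1000000

variable {V : Type} [Fintype V] [DecidableEq V] {s : ℕ}

private lemma entropy_sum_le {ι : Type*} [Fintype ι] (hι : 0 < Fintype.card ι)
    (f : ι → ℝ) (h0 : ∀ i, 0 ≤ f i) (h1 : ∑ i, f i = 1) :
    ∑ i, Real.negMulLog (f i) ≤ Real.log (Fintype.card ι) := by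
  set K : ℝ := (Fintype.card ι : ℝ) with hK
  have hKpos : 0 < K := hK ▸ Nat.cast_pos.2 hι
  have key : ∀ i, Real.negMulLog (f i) ≤ f i * Real.log K + (K⁻¹ - f i) := by
    intro i
    rcases eq_or_lt_of_le (h0 i) with h | h
    · rw [← h, Real.negMulLog_zero]
      simp only [zero_mul, sub_zero, zero_add]
      positivity
    · have hx : (0:ℝ) < (K * f i)⁻¹ := by positivity
      have hlog := Real.log_le_sub_one_of_pos hx
      have expand : Real.negMulLog (f i) = f i * Real.log (K * f i)⁻¹ + f i * Real.log K := by
        rw [Real.negMulLog, Real.log_inv, Real.log_mul (ne_of_gt hKpos) (ne_of_gt h)]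
        ring
      rw [expand]
      have h2 : f i * Real.log (K * f i)⁻¹ ≤ f i * ((K * f i)⁻¹ - 1) :=
        mul_le_mul_of_nonneg_left hlog (le_of_lt h)
      have h3 : f i * (K * f i)⁻¹ = K⁻¹ := by
        rw [mul_inv, mul_comm K⁻¹, ← mul_assoc, mul_inv_cancel₀ (ne_of_gt h), one_mul]
      have h4 : f i * ((K * f i)⁻¹ - 1) = K⁻¹ - f i := by
        rw [mul_sub, h3, mul_one]
      linarith
  calc ∑ i, Real.negMulLog (f i) ≤ ∑ i, (f i * Real.log K + (K⁻¹ - f i)) :=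
        Finset.sum_le_sum fun i _ => key i
    _ = (∑ i, f i) * Real.log K + ((Fintype.card ι : ℝ) * K⁻¹ - ∑ i, f i) := by
        rw [Finset.sum_add_distrib, Finset.sum_sub_distrib, ← Finset.sum_mul,
          Finset.sum_const, Finset.card_univ, nsmul_eq_mul]
    _ = Real.log K := by
        rw [h1, ← hK, mul_inv_cancel₀ (ne_of_gt hKpos)]
        ring

private lemma marg_nonneg (p : (V → Fin s) → ℝ) (hp : ∀ x, 0 ≤ p x) (S : Finset V)
    (y : ↥S → Fin s) : 0 ≤ marginalPMF p S y := by
  apply Finset.sum_nonneg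
  intro x _
  split
  · exact hp x
  · exact le_refl 0

private lemma marg_sum_one (p : (V → Fin s) → ℝ) (hp : ∑ x : V → Fin s, p x = 1)
    (S : Finset V) : ∑ y : ↥S → Fin s, marginalPMF p S y = 1 := by
  unfold marginalPMF
  rw [Finset.sum_comm, ← hp]
  refine Finset.sum_congr rfl fun x _ => ?_
  rw [Finset.sum_eq_single (fun i : ↥S => x i.1)]
  · simp
  · intro y _ hy
    rw [if_neg]
    intro hm
    exact hy (funext fun i => (hm i).symm)
  · simp

private lemma uniform_main (E : V → V → Prop) [DecidableRel E] (hs : 2 ≤ s)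
    (g : V → (V → Fin s) → Fin s) (hg : IsStrategy E g)
    (hC : (correctSet g).Nonempty) :
    IsProbDist (fun x => if x ∈ correctSet g then ((correctSet g).card : ℝ)⁻¹ else 0)
    ∧ InfoConstraints E s (fun x => if x ∈ correctSet g then ((correctSet g).card : ℝ)⁻¹ else 0)
    ∧ Hent s (fun x => if x ∈ correctSet g then ((correctSet g).card : ℝ)⁻¹ else 0) Finset.univ
        = Real.logb s ((correctSet g).card : ℝ) := by
  classical
  set C := correctSet g with hCdef
  have hNpos : (0:ℝ) < (C.card : ℝ) := by exact_mod_cast hC.card_pos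
  have hfix : ∀ x ∈ C, ∀ j, g j x = x j := fun x hx => (Finset.mem_filter.1 hx).2
  refine ⟨⟨fun x => by by_cases h : x ∈ C <;> simp [h], ?_⟩, ?_, ?_⟩
  · rw [Finset.sum_ite_mem, Finset.univ_inter, Finset.sum_const, nsmul_eq_mul,
      mul_inv_cancel₀ (ne_of_gt hNpos)]
  · intro j
    by_cases hj : j ∈ inNbr E j
    · rw [Finset.insert_eq_self.2 hj, sub_self]
    · have hH : Hent s (fun x => if x ∈ C then ((C.card : ℝ))⁻¹ else 0) (insert j (inNbr E j))
          = Hent s (fun x => if x ∈ C then ((C.card : ℝ))⁻¹ else 0) (inNbr E j) := by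
        unfold Hent
        congr 1
        simp only [marg_unif]
        exact sum_negMulLog_insert C g hfix E hg j hj
      rw [hH, sub_self]
  · unfold Hent
    have hcount : ∀ y : ↥(Finset.univ : Finset V) → Fin s,
        C.filter (fun x => ∀ i : ↥(Finset.univ : Finset V), x i.1 = y i)
          = C.filter (fun x => x = (fun v => y ⟨v, Finset.mem_univ v⟩)) := by
      intro y
      apply Finset.filter_congr
      intro x _
      constructor
      · intro h; funext v; exact h ⟨v, Finset.mem_univ v⟩
      · intro h i; rw [h]
    have hterm : ∀ y : ↥(Finset.univ : Finset V) → Fin s,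
        Real.negMulLog (marginalPMF (fun x => if x ∈ C then ((C.card : ℝ))⁻¹ else 0)
            Finset.univ y)
          = (if (fun v => y ⟨v, Finset.mem_univ v⟩) ∈ C
              then Real.negMulLog ((C.card : ℝ))⁻¹ else 0) := by
      intro y
      rw [marg_unif, hcount, Finset.filter_eq']
      by_cases h : (fun v => y ⟨v, Finset.mem_univ v⟩) ∈ C <;> simp [h]
    rw [Finset.sum_congr rfl fun y _ => hterm y]
    have hre : ∑ y : ↥(Finset.univ : Finset V) → Fin s,
        (if (fun v => y ⟨v, Finset.mem_univ v⟩) ∈ C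
          then Real.negMulLog ((C.card : ℝ))⁻¹ else 0)
        = ∑ x : V → Fin s, (if x ∈ C then Real.negMulLog ((C.card : ℝ))⁻¹ else 0) := by
      apply Fintype.sum_equiv
        (Equiv.arrowCongr (Equiv.subtypeUnivEquiv (fun v => Finset.mem_univ v))
          (Equiv.refl (Fin s)))
      intro y
      rfl
    rw [hre, Finset.sum_ite_mem, Finset.univ_inter, Finset.sum_const, nsmul_eq_mul]
    have hnml : Real.negMulLog ((C.card : ℝ))⁻¹ = ((C.card : ℝ))⁻¹ * Real.log (C.card : ℝ) := by
      rw [Real.negMulLog, Real.log_inv]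
      ring
    rw [hnml, Real.logb]
    field_simp

end AuxLemmas3
/-- If the set `C` of fixpoints of a guessing strategy is nonempty, then
the uniform distribution on `C` satisfies the information constraints of `G` and has
`H(V) = log_s |C|`. Consequently `g(G,s) ≤ E(G,s)`. -/
theorem uniform_on_fixpoints_satisfies_constraints {V : Type} [Fintype V] [DecidableEq V]
    (E : V → V → Prop) [DecidableRel E] (s : ℕ) (hs : 2 ≤ s)
    (g : V → (V → Fin s) → Fin s) (hg : IsStrategy E g)
    (hC : (correctSet g).Nonempty)
    (p : (V → Fin s) → ℝ)
    (hp : p = fun x => if x ∈ correctSet g then ((correctSet g).card : ℝ)⁻¹ else 0) :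
    InfoConstraints E s p
    ∧ Hent s p Finset.univ = Real.logb s ((correctSet g).card : ℝ)
    ∧ guessingNumber E s ≤ graphEntropy E s := by
  classical
  obtain ⟨hprob, hinfo, hent⟩ := uniform_main E hs g hg hC
  subst hp
  refine ⟨hinfo, hent, ?_⟩
  have hs1 : (1:ℝ) < (s:ℝ) := by exact_mod_cast hs
  have hspos : (0:ℝ) < (s:ℝ) := lt_trans one_pos hs1
  have hlog : (0:ℝ) < Real.log s := Real.log_pos hs1
  set Mset : Set ℕ :=
    {m : ℕ | ∃ g : V → (V → Fin s) → Fin s, IsStrategy E g ∧ m = (correctSet g).card}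
    with hMset
  have hMdef : maxCorrect E s = sSup Mset := rfl
  have hMbdd : BddAbove Mset := by
    refine ⟨Fintype.card (V → Fin s), ?_⟩
    rintro m ⟨g', -, rfl⟩
    rw [← Finset.card_univ]
    exact Finset.card_filter_le _ _
  have hMne : Mset.Nonempty := ⟨(correctSet g).card, g, hg, rfl⟩
  have hge1 : 0 < maxCorrect E s := by
    rw [hMdef]
    exact lt_of_lt_of_le hC.card_pos (le_csSup hMbdd ⟨g, hg, rfl⟩)
  have hMCmem : maxCorrect E s ∈ Mset := hMdef ▸ Nat.sSup_mem hMne hMbdd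
  obtain ⟨g', hg', hcard'⟩ := hMCmem
  have hC' : (correctSet g').Nonempty := Finset.card_pos.1 (by omega)
  obtain ⟨hprob', hinfo', hent'⟩ := uniform_main E hs g' hg' hC'
  have hNpos' : (0:ℝ) < ((correctSet g').card : ℝ) := by exact_mod_cast hC'.card_pos
  have hbdd : BddAbove {h : ℝ | ∃ p : (V → Fin s) → ℝ,
      IsProbDist p ∧ InfoConstraints E s p ∧ h = Hent s p Finset.univ} := by
    refine ⟨Real.log (Fintype.card (↥(Finset.univ : Finset V) → Fin s)) / Real.log s, ?_⟩
    rintro h ⟨p, hp, -, rfl⟩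
    unfold Hent
    have hpos : 0 < Fintype.card (↥(Finset.univ : Finset V) → Fin s) := by
      have : Nonempty (↥(Finset.univ : Finset V) → Fin s) := ⟨fun _ => ⟨0, by omega⟩⟩
      exact Fintype.card_pos
    exact (div_le_div_iff_of_pos_right hlog).2
      (entropy_sum_le hpos _ (fun y => marg_nonneg p hp.1 _ y) (marg_sum_one p hp.2 _))
  have hle : Real.logb s ((correctSet g').card : ℝ) ≤ graphEntropy E s :=
    le_csSup hbdd ⟨_, hprob', hinfo', hent'.symm⟩
  unfold guessingNumber maxProb
  rw [hcard']
  have hcomp : Real.logb s (((correctSet g').card : ℝ) / (s:ℝ) ^ Fintype.card V)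
      = Real.logb s ((correctSet g').card : ℝ) - (Fintype.card V : ℝ) := by
    rw [Real.logb_div (ne_of_gt hNpos') (ne_of_gt (pow_pos hspos _)),
      Real.logb_pow, Real.logb_self_eq_one hs1, mul_one]
  rw [hcomp]
  linarith
end

section
/- Let p be a probability distribution on A^V satisfying the information constraints of a finite directed graph G, and let u be the uniform probability distribution on the support of p. Then u also satisfies the information constraints of G, and H_u(V) ≥ H_p(V). -/
open Finset

/-! ### Auxiliary lemmas for Statement 4 -/

section Aux

open Real

/-- Superadditivity of `negMulLog` over a sum of nonnegative reals. -/
lemma aux_negMulLog_sum_le {ι : Type*} [Fintype ι] (t : ι → ℝ) (ht : ∀ i, 0 ≤ t i) :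
    Real.negMulLog (∑ i, t i) ≤ ∑ i, Real.negMulLog (t i) := by
  have hpt : ∀ i, t i * (-Real.log (∑ k, t k)) ≤ Real.negMulLog (t i) := by
    intro i
    rcases eq_or_lt_of_le (ht i) with h | h
    · simp [← h]
    · have hTi : t i ≤ ∑ k, t k :=
        Finset.single_le_sum (fun k _ => ht k) (Finset.mem_univ i)
      have hlog : Real.log (t i) ≤ Real.log (∑ k, t k) := Real.log_le_log h hTi
      have := mul_le_mul_of_nonneg_left (neg_le_neg hlog) h.le
      simpa [Real.negMulLog, neg_mul, mul_neg] using this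
  calc Real.negMulLog (∑ i, t i) = ∑ i, t i * (-Real.log (∑ k, t k)) := by
        rw [← Finset.sum_mul]; simp [Real.negMulLog, neg_mul, mul_neg]
    _ ≤ ∑ i, Real.negMulLog (t i) := Finset.sum_le_sum fun i _ => hpt i

/-- If at most one coordinate is positive, equality holds in superadditivity. -/
lemma aux_negMulLog_sum_eq {ι : Type*} [Fintype ι] [DecidableEq ι] (t : ι → ℝ)
    (ht : ∀ i, 0 ≤ t i) (h1 : ∀ a b, 0 < t a → 0 < t b → a = b) :
    ∑ i, Real.negMulLog (t i) = Real.negMulLog (∑ i, t i) := by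
  by_cases hex : ∃ a, 0 < t a
  · obtain ⟨a, ha⟩ := hex
    have hz : ∀ b, b ≠ a → t b = 0 := fun b hb =>
      le_antisymm (by
        by_contra h
        exact hb (h1 b a (lt_of_le_of_ne (ht b) (fun he => h he.symm.le)) ha)) (ht b)
    rw [Finset.sum_eq_single a (fun b _ hb => by simp [hz b hb]) (by simp),
        Finset.sum_eq_single a (fun b _ hb => hz b hb) (by simp)]
  · push_neg at hex
    have hz : ∀ i, t i = 0 := fun i => le_antisymm (hex i) (ht i)
    simp [hz]

/-- Conversely, equality in superadditivity forces at most one positive coordinate. -/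
lemma aux_subsingleton_of_negMulLog_sum_eq {ι : Type*} [Fintype ι] [DecidableEq ι]
    (t : ι → ℝ) (ht : ∀ i, 0 ≤ t i)
    (heq : ∑ i, Real.negMulLog (t i) = Real.negMulLog (∑ i, t i))
    {a b : ι} (ha : 0 < t a) (hb : 0 < t b) : a = b := by
  by_contra hab
  set T := ∑ i, t i with hTdef
  have hab2 : t a + t b ≤ T := by
    have := Finset.sum_le_sum_of_subset_of_nonneg
      (Finset.subset_univ ({a, b} : Finset ι)) (fun i _ _ => ht i)
    rwa [Finset.sum_pair hab] at this
  have hTa : t a < T := by linarith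
  have hT : 0 < T := lt_trans ha hTa
  have hpt : ∀ i ∈ Finset.univ, t i * (-Real.log T) ≤ Real.negMulLog (t i) := by
    intro i _
    rcases eq_or_lt_of_le (ht i) with h | h
    · simp [← h]
    · have hTi : t i ≤ T :=
        Finset.single_le_sum (fun k _ => ht k) (Finset.mem_univ i)
      have hlog : Real.log (t i) ≤ Real.log T := Real.log_le_log h hTi
      have := mul_le_mul_of_nonneg_left (neg_le_neg hlog) h.le
      simpa [Real.negMulLog, neg_mul, mul_neg] using this
  have hsum : ∑ i, t i * (-Real.log T) = ∑ i, Real.negMulLog (t i) := by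
    rw [heq, ← Finset.sum_mul]
    simp [Real.negMulLog, neg_mul, mul_neg]
    exact Or.inl hTdef.symm
  have hea := (Finset.sum_eq_sum_iff_of_le hpt).mp hsum a (Finset.mem_univ a)
  -- t a * (-log T) = negMulLog (t a) = -(t a) * log (t a)
  have hlogeq : Real.log (t a) = Real.log T := by
    have h' : t a * Real.log T = t a * Real.log (t a) := by
      simp only [Real.negMulLog, neg_mul, mul_neg] at hea
      linarith
    exact (mul_left_cancel₀ (ne_of_gt ha) h'.symm)
  have : t a = T := Real.log_injOn_pos (Set.mem_Ioi.mpr ha) (Set.mem_Ioi.mpr hT) hlogeq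
  linarith

/-- Extension equivalence: `(S → A) × A ≃ (insert j S → A)` for `j ∉ S`. -/
def extEquiv {V : Type*} [DecidableEq V] (A : Type*) (S : Finset V) (j : V) (hj : j ∉ S) :
    ((↥S → A) × A) ≃ (↥(insert j S) → A) where
  toFun ya i := if h : (i : V) = j then ya.2
    else ya.1 ⟨i, (Finset.mem_insert.mp i.2).resolve_left h⟩
  invFun y' := (fun i => y' ⟨i, Finset.mem_insert_of_mem i.2⟩,
    y' ⟨j, Finset.mem_insert_self j S⟩)
  left_inv ya := by
    obtain ⟨y, a⟩ := ya
    refine Prod.ext ?_ ?_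
    · funext i
      have hij : (i : V) ≠ j := fun h => hj (h ▸ i.2)
      simp [hij]
    · simp
  right_inv y' := by
    funext i
    by_cases h : (i : V) = j
    · simp only [dif_pos h]
      congr 1
      exact Subtype.ext h.symm
    · simp only [dif_neg h]

lemma extEquiv_cond {V A : Type*} [DecidableEq V] (S : Finset V) (j : V) (hj : j ∉ S)
    (y : ↥S → A) (a : A) (x : V → A) :
    (∀ i : ↥(insert j S), x i.1 = extEquiv A S j hj (y, a) i) ↔
      (x j = a ∧ ∀ i : ↥S, x i.1 = y i) := by
  constructor
  · intro h
    constructor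
    · have := h ⟨j, Finset.mem_insert_self j S⟩
      simpa [extEquiv] using this
    · intro i
      have hij : (i : V) ≠ j := fun he => hj (he ▸ i.2)
      have := h ⟨i, Finset.mem_insert_of_mem i.2⟩
      simpa [extEquiv, hij] using this
  · rintro ⟨h1, h2⟩ i
    by_cases h : (i : V) = j
    · simp only [extEquiv, Equiv.coe_fn_mk, dif_pos h]
      rw [h, h1]
    · simp only [extEquiv, Equiv.coe_fn_mk, dif_neg h]
      exact h2 ⟨i.1, (Finset.mem_insert.mp i.2).resolve_left h⟩

lemma aux_marginal_nonneg {V A : Type*} [Fintype V] [DecidableEq V] [Fintype A]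
    [DecidableEq A] (q : (V → A) → ℝ) (hq : ∀ x, 0 ≤ q x) (S : Finset V) (y : ↥S → A) :
    0 ≤ marginalPMF q S y := by
  refine Finset.sum_nonneg fun x _ => ?_
  split <;> simp [hq x]

lemma aux_marginal_insert_sum {V A : Type*} [Fintype V] [DecidableEq V] [Fintype A]
    [DecidableEq A] (q : (V → A) → ℝ) (S : Finset V) (j : V) (hj : j ∉ S) (y : ↥S → A) :
    marginalPMF q S y = ∑ a : A, marginalPMF q (insert j S) (extEquiv A S j hj (y, a)) := by
  unfold marginalPMF
  rw [Finset.sum_comm]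
  refine Finset.sum_congr rfl fun x _ => ?_
  have hc : ∀ a : A, (∀ i : ↥(insert j S), x i.1 = extEquiv A S j hj (y, a) i) ↔
      (x j = a ∧ ∀ i : ↥S, x i.1 = y i) := fun a => extEquiv_cond S j hj y a x
  calc (if ∀ i : ↥S, x i.1 = y i then q x else 0)
      = ∑ a : A, (if x j = a ∧ (∀ i : ↥S, x i.1 = y i) then q x else 0) := by
        by_cases hP : ∀ i : ↥S, x i.1 = y i
        · rw [if_pos hP]
          have h5 : ∀ a : A, (if x j = a ∧ (∀ i : ↥S, x i.1 = y i) then q x else 0)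
              = (if x j = a then q x else 0) := fun a => if_congr (and_iff_left hP) rfl rfl
          rw [Finset.sum_congr rfl fun a _ => h5 a,
            Finset.sum_ite_eq Finset.univ (x j) (fun _ => q x), if_pos (Finset.mem_univ _)]
        · rw [if_neg hP]
          exact (Finset.sum_eq_zero fun a _ => if_neg (fun h => hP h.2)).symm
    _ = ∑ a : A, (if ∀ i : ↥(insert j S), x i.1 = extEquiv A S j hj (y, a) i
          then q x else 0) := by
        refine Finset.sum_congr rfl fun a _ => ?_
        exact (if_congr (hc a).symm rfl rfl)

lemma aux_exists_of_marginal_pos {V A : Type*} [Fintype V] [DecidableEq V] [Fintype A]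
    [DecidableEq A] (q : (V → A) → ℝ) (hq : ∀ x, 0 ≤ q x) (S : Finset V) (y : ↥S → A)
    (h : 0 < marginalPMF q S y) : ∃ x, 0 < q x ∧ ∀ i : ↥S, x i.1 = y i := by
  by_contra hc
  push_neg at hc
  have hz : marginalPMF q S y = 0 := by
    refine Finset.sum_eq_zero fun x _ => ?_
    split_ifs with h'
    · rcases eq_or_lt_of_le (hq x) with h0 | h0
      · exact h0.symm
      · obtain ⟨i, hi⟩ := hc x h0
        exact absurd (h' i) hi
    · rfl
  rw [hz] at h
  exact lt_irrefl _ h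

lemma aux_le_marginal {V A : Type*} [Fintype V] [DecidableEq V] [Fintype A]
    [DecidableEq A] (q : (V → A) → ℝ) (hq : ∀ x, 0 ≤ q x) (S : Finset V) (y : ↥S → A)
    (x : V → A) (hx : ∀ i : ↥S, x i.1 = y i) : q x ≤ marginalPMF q S y := by
  unfold marginalPMF
  calc q x = (if ∀ i : ↥S, x i.1 = y i then q x else 0) := (if_pos hx).symm
    _ ≤ ∑ z : V → A, (if ∀ i : ↥S, z i.1 = y i then q z else 0) :=
      Finset.single_le_sum (f := fun z => if ∀ i : ↥S, z i.1 = y i then q z else 0)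
        (fun z _ => by split <;> simp [hq z]) (Finset.mem_univ x)

/-- Backward direction: a functional dependence on the support gives equality of
the two raw entropy sums. -/
lemma aux_sum_eq_of_funcdep {V A : Type*} [Fintype V] [DecidableEq V] [Fintype A]
    [DecidableEq A] (q : (V → A) → ℝ) (hq : ∀ x, 0 ≤ q x) (S : Finset V) (j : V)
    (hj : j ∉ S)
    (hfun : ∀ x x', 0 < q x → 0 < q x' → (∀ i ∈ S, x i = x' i) → x j = x' j) :
    ∑ y' : ↥(insert j S) → A, Real.negMulLog (marginalPMF q (insert j S) y')
      = ∑ y : ↥S → A, Real.negMulLog (marginalPMF q S y) := by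
  have hcomp : ∑ ya : (↥S → A) × A,
      Real.negMulLog (marginalPMF q (insert j S) (extEquiv A S j hj ya))
      = ∑ y' : ↥(insert j S) → A, Real.negMulLog (marginalPMF q (insert j S) y') :=
    Equiv.sum_comp (extEquiv A S j hj)
      (fun y' => Real.negMulLog (marginalPMF q (insert j S) y'))
  have hprod : ∑ ya : (↥S → A) × A,
      Real.negMulLog (marginalPMF q (insert j S) (extEquiv A S j hj ya))
      = ∑ y : ↥S → A, ∑ a : A,
        Real.negMulLog (marginalPMF q (insert j S) (extEquiv A S j hj (y, a))) :=
    Fintype.sum_prod_type _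
  rw [← hcomp, hprod]
  refine Finset.sum_congr rfl fun y _ => ?_
  rw [aux_marginal_insert_sum q S j hj y]
  refine aux_negMulLog_sum_eq _ (fun a => aux_marginal_nonneg q hq _ _) ?_
  intro a b ha hb
  obtain ⟨x, hx, hxc⟩ := aux_exists_of_marginal_pos q hq _ _ ha
  obtain ⟨x', hx', hxc'⟩ := aux_exists_of_marginal_pos q hq _ _ hb
  obtain ⟨hxa, hxS⟩ := (extEquiv_cond S j hj y a x).mp hxc
  obtain ⟨hxb, hxS'⟩ := (extEquiv_cond S j hj y b x').mp hxc'
  have : x j = x' j := hfun x x' hx hx' (fun i hi => by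
    rw [hxS ⟨i, hi⟩, hxS' ⟨i, hi⟩])
  rw [← hxa, ← hxb, this]

/-- Forward direction: equality of the two raw entropy sums forces a functional
dependence on the support. -/
lemma aux_funcdep_of_sum_eq {V A : Type*} [Fintype V] [DecidableEq V] [Fintype A]
    [DecidableEq A] (q : (V → A) → ℝ) (hq : ∀ x, 0 ≤ q x) (S : Finset V) (j : V)
    (hj : j ∉ S)
    (heq : ∑ y' : ↥(insert j S) → A, Real.negMulLog (marginalPMF q (insert j S) y')
      = ∑ y : ↥S → A, Real.negMulLog (marginalPMF q S y)) :
    ∀ x x', 0 < q x → 0 < q x' → (∀ i ∈ S, x i = x' i) → x j = x' j := by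
  have hcomp : ∑ ya : (↥S → A) × A,
      Real.negMulLog (marginalPMF q (insert j S) (extEquiv A S j hj ya))
      = ∑ y' : ↥(insert j S) → A, Real.negMulLog (marginalPMF q (insert j S) y') :=
    Equiv.sum_comp (extEquiv A S j hj)
      (fun y' => Real.negMulLog (marginalPMF q (insert j S) y'))
  have hprod : ∑ ya : (↥S → A) × A,
      Real.negMulLog (marginalPMF q (insert j S) (extEquiv A S j hj ya))
      = ∑ y : ↥S → A, ∑ a : A,
        Real.negMulLog (marginalPMF q (insert j S) (extEquiv A S j hj (y, a))) :=
    Fintype.sum_prod_type _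
  have heq2 : ∑ y : ↥S → A, Real.negMulLog (∑ a : A,
        marginalPMF q (insert j S) (extEquiv A S j hj (y, a)))
      = ∑ y : ↥S → A, ∑ a : A,
        Real.negMulLog (marginalPMF q (insert j S) (extEquiv A S j hj (y, a))) := by
    calc ∑ y : ↥S → A, Real.negMulLog (∑ a : A,
          marginalPMF q (insert j S) (extEquiv A S j hj (y, a)))
        = ∑ y : ↥S → A, Real.negMulLog (marginalPMF q S y) :=
          Finset.sum_congr rfl fun y _ => by rw [← aux_marginal_insert_sum q S j hj y]
      _ = ∑ y' : ↥(insert j S) → A, Real.negMulLog (marginalPMF q (insert j S) y') :=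
          heq.symm
      _ = ∑ ya : (↥S → A) × A,
          Real.negMulLog (marginalPMF q (insert j S) (extEquiv A S j hj ya)) := hcomp.symm
      _ = _ := hprod
  have hle : ∀ y ∈ (Finset.univ : Finset (↥S → A)),
      Real.negMulLog (∑ a : A, marginalPMF q (insert j S) (extEquiv A S j hj (y, a)))
        ≤ ∑ a : A, Real.negMulLog (marginalPMF q (insert j S) (extEquiv A S j hj (y, a))) :=
    fun y _ => aux_negMulLog_sum_le _ (fun a => aux_marginal_nonneg q hq _ _)
  have hpt := (Finset.sum_eq_sum_iff_of_le hle).mp heq2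
  intro x x' hx hx' hagree
  set y : ↥S → A := fun i => x i.1 with hy
  have hyeq := hpt y (Finset.mem_univ y)
  have hxc : ∀ i : ↥(insert j S), x i.1 = extEquiv A S j hj (y, x j) i :=
    (extEquiv_cond S j hj y (x j) x).mpr ⟨rfl, fun i => rfl⟩
  have hxc' : ∀ i : ↥(insert j S), x' i.1 = extEquiv A S j hj (y, x' j) i :=
    (extEquiv_cond S j hj y (x' j) x').mpr ⟨rfl, fun i => (hagree i.1 i.2).symm⟩
  have ha : 0 < marginalPMF q (insert j S) (extEquiv A S j hj (y, x j)) :=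
    lt_of_lt_of_le hx (aux_le_marginal q hq _ _ x hxc)
  have hb : 0 < marginalPMF q (insert j S) (extEquiv A S j hj (y, x' j)) :=
    lt_of_lt_of_le hx' (aux_le_marginal q hq _ _ x' hxc')
  exact aux_subsingleton_of_negMulLog_sum_eq
    (fun a => marginalPMF q (insert j S) (extEquiv A S j hj (y, a)))
    (fun a => aux_marginal_nonneg q hq _ _) hyeq.symm ha hb

/-- The marginal on `univ` is just `q` itself (up to the canonical bijection). -/
lemma aux_marginal_univ {V A : Type*} [Fintype V] [DecidableEq V] [Fintype A]
    [DecidableEq A] (q : (V → A) → ℝ) (y : ↥(Finset.univ : Finset V) → A) :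
    marginalPMF q Finset.univ y = q (fun i => y ⟨i, Finset.mem_univ i⟩) := by
  unfold marginalPMF
  have : ∀ x : V → A, (∀ i : ↥(Finset.univ : Finset V), x i.1 = y i) ↔
      x = (fun i => y ⟨i, Finset.mem_univ i⟩) := by
    intro x
    constructor
    · intro h; funext i; exact h ⟨i, Finset.mem_univ i⟩
    · intro h i; rw [h]
  calc (∑ x : V → A, if ∀ i : ↥(Finset.univ : Finset V), x i.1 = y i then q x else 0)
      = ∑ x : V → A, if x = (fun i => y ⟨i, Finset.mem_univ i⟩) then q x else 0 :=
        Finset.sum_congr rfl fun x _ => if_congr (this x) rfl rfl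
    _ = q (fun i => y ⟨i, Finset.mem_univ i⟩) := by
        rw [Finset.sum_ite_eq' Finset.univ _ q]; simp

lemma aux_hent_univ {V A : Type*} [Fintype V] [DecidableEq V] [Fintype A]
    [DecidableEq A] (s : ℕ) (q : (V → A) → ℝ) :
    Hent s q Finset.univ = (∑ x : V → A, Real.negMulLog (q x)) / Real.log s := by
  unfold Hent
  congr 1
  let e : ((↥(Finset.univ : Finset V)) → A) ≃ (V → A) :=
    { toFun := fun y i => y ⟨i, Finset.mem_univ i⟩
      invFun := fun x i => x i.1
      left_inv := fun y => rfl
      right_inv := fun x => rfl }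
  calc ∑ y : ↥(Finset.univ : Finset V) → A, Real.negMulLog (marginalPMF q Finset.univ y)
      = ∑ y : ↥(Finset.univ : Finset V) → A, Real.negMulLog (q (e y)) := by
        refine Finset.sum_congr rfl fun y _ => ?_
        rw [aux_marginal_univ]
        rfl
    _ = ∑ x : V → A, Real.negMulLog (q x) := Equiv.sum_comp e (fun x => Real.negMulLog (q x))

end Aux

/-- If `p` satisfies the information constraints of `G` and `u` is the
uniform distribution on the support of `p`, then `u` also satisfies the information
constraints of `G` and `H_u(V) ≥ H_p(V)`. -/
theorem uniform_on_support_satisfies_constraints {V : Type} [Fintype V] [DecidableEq V]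
    (E : V → V → Prop) [DecidableRel E] (s : ℕ) (hs : 2 ≤ s)
    (p : (V → Fin s) → ℝ) (hp : IsProbDist p) (hpc : InfoConstraints E s p)
    (u : (V → Fin s) → ℝ)
    (hu : u = fun x => if 0 < p x
      then ((Finset.univ.filter (fun y : V → Fin s => 0 < p y)).card : ℝ)⁻¹ else 0) :
    InfoConstraints E s u ∧ Hent s p Finset.univ ≤ Hent s u Finset.univ := by
  obtain ⟨hp1, hp2⟩ := hp
  set T : Finset (V → Fin s) := Finset.univ.filter (fun y => 0 < p y) with hT
  have hTne : T.Nonempty := by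
    by_contra h
    rw [Finset.not_nonempty_iff_eq_empty, Finset.filter_eq_empty_iff] at h
    have : ∑ x : V → Fin s, p x = 0 :=
      Finset.sum_eq_zero fun x hx => le_antisymm (not_lt.mp (h hx)) (hp1 x)
    rw [hp2] at this
    norm_num at this
  have hc : (0 : ℝ) < (T.card : ℝ) := by
    exact_mod_cast Finset.card_pos.mpr hTne
  have usupp : ∀ x, 0 < u x ↔ 0 < p x := by
    intro x
    simp only [hu]
    split_ifs with h
    · exact iff_of_true (inv_pos.mpr hc) h
    · exact iff_of_false (lt_irrefl 0) h
  have hu0 : ∀ x, 0 ≤ u x := by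
    intro x
    simp only [hu]
    split_ifs with h
    · exact (inv_pos.mpr hc).le
    · exact le_refl 0
  have hlogs : 0 < Real.log s := Real.log_pos (by exact_mod_cast lt_of_lt_of_le one_lt_two hs)
  constructor
  · -- info constraints for u
    intro j
    set S : Finset V := inNbr E j with hS
    by_cases hjS : j ∈ S
    · rw [Finset.insert_eq_self.mpr hjS, sub_self]
    · have hpe : Hent s p (insert j S) = Hent s p S := by
        have := hpc j
        rw [hS]; linarith [hpc j]
      have hsum_p : ∑ y' : ↥(insert j S) → Fin s,
          Real.negMulLog (marginalPMF p (insert j S) y')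
          = ∑ y : ↥S → Fin s, Real.negMulLog (marginalPMF p S y) := by
        unfold Hent at hpe
        rw [div_eq_div_iff (ne_of_gt hlogs) (ne_of_gt hlogs)] at hpe
        exact mul_right_cancel₀ (ne_of_gt hlogs) hpe
      have hfun_p := aux_funcdep_of_sum_eq p hp1 S j hjS hsum_p
      have hfun_u : ∀ x x', 0 < u x → 0 < u x' → (∀ i ∈ S, x i = x' i) → x j = x' j :=
        fun x x' hx hx' hag => hfun_p x x' ((usupp x).mp hx) ((usupp x').mp hx') hag
      have hsum_u := aux_sum_eq_of_funcdep u hu0 S j hjS hfun_u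
      unfold Hent
      rw [hsum_u, sub_self]
  · -- entropy inequality
    rw [aux_hent_univ, aux_hent_univ]
    have hsum_u : ∑ x : V → Fin s, Real.negMulLog (u x) = Real.log (T.card : ℝ) := by
      have h1 : ∀ x : V → Fin s, Real.negMulLog (u x)
          = if 0 < p x then Real.negMulLog ((T.card : ℝ)⁻¹) else 0 := by
        intro x
        rw [hu]
        simp [apply_ite Real.negMulLog]
      calc ∑ x : V → Fin s, Real.negMulLog (u x)
          = ∑ x : V → Fin s, if 0 < p x then Real.negMulLog ((T.card : ℝ)⁻¹) else 0 :=
            Finset.sum_congr rfl fun x _ => h1 x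
        _ = ∑ _x ∈ T, Real.negMulLog ((T.card : ℝ)⁻¹) := (Finset.sum_filter _ _).symm
        _ = (T.card : ℝ) * Real.negMulLog ((T.card : ℝ)⁻¹) := by
            rw [Finset.sum_const, nsmul_eq_mul]
        _ = Real.log (T.card : ℝ) := by
            rw [Real.negMulLog, Real.log_inv]
            field_simp
    rw [hsum_u]
    have hsumT_p : ∑ x ∈ T, p x = 1 := by
      rw [← hp2]
      refine Finset.sum_subset (Finset.subset_univ T) fun x _ hx => ?_
      rw [hT, Finset.mem_filter] at hx
      push_neg at hx
      exact le_antisymm (hx (Finset.mem_univ x)) (hp1 x)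
    have hsum_p_T : ∑ x : V → Fin s, Real.negMulLog (p x)
        = ∑ x ∈ T, Real.negMulLog (p x) := by
      refine (Finset.sum_subset (Finset.subset_univ T) fun x _ hx => ?_).symm
      rw [hT, Finset.mem_filter] at hx
      push_neg at hx
      have : p x = 0 := le_antisymm (hx (Finset.mem_univ x)) (hp1 x)
      rw [this, Real.negMulLog_zero]
    have hterm : ∀ x ∈ T, Real.negMulLog (p x)
        ≤ ((T.card : ℝ))⁻¹ - p x + p x * Real.log (T.card : ℝ) := by
      intro x hx
      have hpx : 0 < p x := (Finset.mem_filter.mp hx).2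
      set c : ℝ := (T.card : ℝ)
      have h1 : Real.log ((c * p x)⁻¹) ≤ (c * p x)⁻¹ - 1 :=
        Real.log_le_sub_one_of_pos (by positivity)
      have h2 : Real.log ((c * p x)⁻¹) = -(Real.log c + Real.log (p x)) := by
        rw [Real.log_inv, Real.log_mul (ne_of_gt hc) (ne_of_gt hpx)]
      have h3 : p x * (c * p x)⁻¹ = c⁻¹ := by
        field_simp
      have h4 := mul_le_mul_of_nonneg_left h1 hpx.le
      rw [h2] at h4
      rw [mul_sub, h3] at h4
      rw [Real.negMulLog]
      nlinarith [h4]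
    have hle : ∑ x : V → Fin s, Real.negMulLog (p x) ≤ Real.log (T.card : ℝ) := by
      rw [hsum_p_T]
      calc ∑ x ∈ T, Real.negMulLog (p x)
          ≤ ∑ x ∈ T, (((T.card : ℝ))⁻¹ - p x + p x * Real.log (T.card : ℝ)) :=
            Finset.sum_le_sum hterm
        _ = (T.card : ℝ) * ((T.card : ℝ))⁻¹ - 1 + Real.log (T.card : ℝ) * 1 := by
            rw [Finset.sum_add_distrib, Finset.sum_sub_distrib, Finset.sum_const,
              nsmul_eq_mul, hsumT_p, ← Finset.sum_mul, hsumT_p]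
            ring
        _ = Real.log (T.card : ℝ) := by
            rw [mul_inv_cancel₀ (ne_of_gt hc)]
            ring
    gcongr
end

section
/- For every finite directed graph G = (V,E), the S-entropy of G is bounded above by |V| minus the acyclic independence number of G: E_S(G) ≤ |V| − α_acyc(G). -/
open Finset

section Aux

variable {V : Type} [Fintype V] [DecidableEq V] (E : V → V → Prop) [DecidableRel E]

/-- In a nonempty acyclic set there is a sink: a vertex with no out-edge into the set. -/
lemma exists_sink_aux (S : Finset V) (hS : AcyclicOn E S) (hne : S.Nonempty) :
    ∃ v ∈ S, ∀ u ∈ S, ¬ E v u := by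
  classical
  set r : V → V → Prop := fun a b => a ∈ S ∧ b ∈ S ∧ E a b with hr
  set succ : V → Finset V := fun v => S.filter (fun u => Relation.TransGen r v u) with hsucc
  obtain ⟨v, hvS, hmin⟩ := Finset.exists_min_image S (fun v => (succ v).card) hne
  refine ⟨v, hvS, ?_⟩
  intro u huS hE
  have hvu : Relation.TransGen r v u := Relation.TransGen.single ⟨hvS, huS, hE⟩
  have husub : succ u ⊆ succ v := by
    intro w hw
    simp only [hsucc, Finset.mem_filter] at hw ⊢
    exact ⟨hw.1, hvu.trans hw.2⟩
  have huv : u ∈ succ v := by simp [hsucc, huS, hvu]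
  have huu : u ∉ succ u := by
    simp only [hsucc, Finset.mem_filter]
    rintro ⟨-, h⟩
    exact hS u huS h
  have hlt : (succ u).card < (succ v).card :=
    Finset.card_lt_card ⟨husub, fun hsub => huu (hsub huv)⟩
  exact absurd (hmin u huS) (not_le.mpr hlt)

/-- Removing a vertex whose in-neighbourhood stays inside does not decrease `f`. -/
lemma f_erase_aux (f : Finset V → ℝ) (hf : SEntLike f) (hc : FConstraints E f)
    (v : V) (X : Finset V) (hvX : v ∈ X) (hN : inNbr E v ⊆ X.erase v) :
    f X ≤ f (X.erase v) := by
  obtain ⟨h0, hmono, hsub⟩ := hf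
  have hkey := hsub (X.erase v) (insert v (inNbr E v))
  have hint : (X.erase v) ∩ (insert v (inNbr E v)) = inNbr E v := by
    ext a
    simp only [Finset.mem_inter, Finset.mem_insert, Finset.mem_erase]
    constructor
    · rintro ⟨⟨hne, -⟩, (rfl | h)⟩
      · exact absurd rfl hne
      · exact h
    · intro h
      exact ⟨Finset.mem_erase.mp (hN h), Or.inr h⟩
  have hun : (X.erase v) ∪ (insert v (inNbr E v)) = X := by
    ext a
    simp only [Finset.mem_union, Finset.mem_insert, Finset.mem_erase]
    constructor
    · rintro (⟨-, h⟩ | rfl | h)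
      · exact h
      · exact hvX
      · exact (Finset.mem_erase.mp (hN h)).2
    · intro ha
      by_cases hav : a = v
      · exact Or.inr (Or.inl hav)
      · exact Or.inl ⟨hav, ha⟩
  rw [hint, hun, hc v] at hkey
  linarith

/-- Deleting an acyclic set (with no edges entering it from outside `X`). -/
lemma f_sdiff_aux (f : Finset V → ℝ) (hf : SEntLike f) (hc : FConstraints E f) :
    ∀ (n : ℕ) (S X : Finset V), S.card = n → S ⊆ X → AcyclicOn E S →
      (∀ u w, u ∉ X → w ∈ S → ¬ E u w) → f X ≤ f (X \ S) := by
  intro n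
  induction n with
  | zero =>
    intro S X hcard _ _ _
    rw [Finset.card_eq_zero] at hcard
    subst hcard
    simp
  | succ n ih =>
    intro S X hcard hSX hacyc hout
    have hne : S.Nonempty := by
      rw [← Finset.card_pos, hcard]; omega
    obtain ⟨v, hvS, hsink⟩ := exists_sink_aux E S hacyc hne
    have hvX : v ∈ X := hSX hvS
    have hN : inNbr E v ⊆ X.erase v := by
      intro i hi
      have hEiv : E i v := by simpa [inNbr] using hi
      have hiX : i ∈ X := by
        by_contra h
        exact hout i v h hvS hEiv
      have hiv : i ≠ v := by
        rintro rfl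
        exact hsink i hvS hEiv
      exact Finset.mem_erase.mpr ⟨hiv, hiX⟩
    have h1 : f X ≤ f (X.erase v) := f_erase_aux E f hf hc v X hvX hN
    have h2 : f (X.erase v) ≤ f ((X.erase v) \ (S.erase v)) := by
      apply ih (S.erase v) (X.erase v)
      · rw [Finset.card_erase_of_mem hvS, hcard]; omega
      · exact Finset.erase_subset_erase v hSX
      · intro w hw hcyc
        refine hacyc w (Finset.mem_of_mem_erase hw) (Relation.TransGen.mono ?_ w w hcyc)
        rintro a b ⟨ha, hb, hE⟩
        exact ⟨Finset.mem_of_mem_erase ha, Finset.mem_of_mem_erase hb, hE⟩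
      · intro u w hu hw
        by_cases huv : u = v
        · subst huv
          exact hsink w (Finset.mem_of_mem_erase hw)
        · exact hout u w (fun h => hu (Finset.mem_erase.mpr ⟨huv, h⟩))
            (Finset.mem_of_mem_erase hw)
    have heq : (X.erase v) \ (S.erase v) = X \ S := by
      ext a
      by_cases hav : a = v
      · subst hav; simp [hvS]
      · simp only [Finset.mem_sdiff, Finset.mem_erase, hav, ne_eq,
          not_false_eq_true, true_and]
    rw [heq] at h2
    linarith

/-- Normalized entropy-like functions are bounded by cardinality. -/
lemma f_le_card_aux (f : Finset V → ℝ) (hf : SEntLike f) (hnorm : ∀ j : V, f {j} ≤ 1) :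
    ∀ X : Finset V, f X ≤ X.card := by
  obtain ⟨h0, hmono, hsub⟩ := hf
  intro X
  induction X using Finset.induction with
  | empty => simp [h0]
  | @insert a s ha ih =>
    have hkey := hsub {a} s
    have hint : ({a} : Finset V) ∩ s = ∅ := by
      rw [Finset.singleton_inter_of_notMem ha]
    have hun : ({a} : Finset V) ∪ s = insert a s := (Finset.insert_eq a s).symm
    rw [hint, hun, h0] at hkey
    rw [Finset.card_insert_of_notMem ha]
    push_cast
    have := hnorm a
    linarith

end Aux

/-- The S-entropy of `G` is at most `|V|` minus the acyclic independence
number of `G`. -/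
theorem SEnt_le_card_sub_acycIndepNum {V : Type} [Fintype V] [DecidableEq V]
    (E : V → V → Prop) [DecidableRel E] :
    SEnt E ≤ (Fintype.card V : ℝ) - (acycIndepNum E : ℝ) := by
  classical
  -- the acyclic independence number is attained
  have hmem : acycIndepNum E ∈ {k : ℕ | ∃ S : Finset V, AcyclicOn E S ∧ k = S.card} := by
    apply Nat.sSup_mem
    · exact ⟨0, ∅, fun v hv => absurd hv (Finset.notMem_empty v), rfl⟩
    · refine ⟨Fintype.card V, ?_⟩
      rintro k ⟨S, -, rfl⟩
      exact S.card_le_univ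
  obtain ⟨S, hS, hcard⟩ := hmem
  apply csSup_le
  · exact ⟨0, (fun _ => 0), ⟨rfl, fun _ _ _ => le_refl 0, fun _ _ => by norm_num⟩,
      fun _ => by norm_num, fun _ => rfl, rfl⟩
  rintro h ⟨f, hf, hnorm, hcon, rfl⟩
  have h1 : f Finset.univ ≤ f (Finset.univ \ S) := by
    apply f_sdiff_aux E f hf hcon S.card S Finset.univ rfl (Finset.subset_univ S) hS
    intro u w hu _
    exact absurd (Finset.mem_univ u) hu
  have h2 : f (Finset.univ \ S) ≤ (Finset.univ \ S).card :=
    f_le_card_aux f hf hnorm _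
  have h3 : ((Finset.univ \ S).card : ℝ)
      = (Fintype.card V : ℝ) - (acycIndepNum E : ℝ) := by
    rw [Finset.card_sdiff_of_subset (Finset.subset_univ S), hcard, Finset.card_univ]
    rw [Nat.cast_sub S.card_le_univ]
  linarith
end

section
/- Every normalized S-entropy-like function f on subsets of {1,...,5} that satisfies the information constraints of the bidirected pentagon C5 has f({1,2,3,4,5}) ≤ 5/2; that is, E_S(C5) ≤ 5/2. -/
open Finset

/-- Every normalized S-entropy-like function on subsets of the vertices
of the bidirected pentagon `C5` that satisfies the information constraints of `C5` has
`f(V) ≤ 5/2`; that is, `E_S(C5) ≤ 5/2`. -/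
theorem pentagon_SEnt_le_five_halves :
    (∀ f : Finset (Fin 5) → ℝ, SEntLike f → (∀ j : Fin 5, f {j} ≤ 1) →
      FConstraints E5 f → f Finset.univ ≤ 5 / 2)
    ∧ SEnt E5 ≤ 5 / 2 := by
  have main : ∀ f : Finset (Fin 5) → ℝ, SEntLike f → (∀ j : Fin 5, f {j} ≤ 1) →
      FConstraints E5 f → f Finset.univ ≤ 5 / 2 := by
    intro f hS hnorm hcon
    obtain ⟨h0, hmono, hsub⟩ := hS
    have A1 : f (∅ : Finset (Fin 5)) + f ({0,2} : Finset (Fin 5)) ≤ f {0} + f {2} := by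
      have h := hsub {0} {2}
      rwa [(by decide : ({0} : Finset (Fin 5)) ∩ {2} = ∅),
        (by decide : ({0} : Finset (Fin 5)) ∪ {2} = {0,2})] at h
    have A2 : f (∅ : Finset (Fin 5)) + f ({0,3} : Finset (Fin 5)) ≤ f {0} + f {3} := by
      have h := hsub {0} {3}
      rwa [(by decide : ({0} : Finset (Fin 5)) ∩ {3} = ∅),
        (by decide : ({0} : Finset (Fin 5)) ∪ {3} = {0,3})] at h
    have A3 : f (∅ : Finset (Fin 5)) + f ({1,4} : Finset (Fin 5)) ≤ f {1} + f {4} := by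
      have h := hsub {1} {4}
      rwa [(by decide : ({1} : Finset (Fin 5)) ∩ {4} = ∅),
        (by decide : ({1} : Finset (Fin 5)) ∪ {4} = {1,4})] at h
    have A4 : f ({0} : Finset (Fin 5)) + f ({0,1,3} : Finset (Fin 5)) ≤ f {0,1} + f {0,3} := by
      have h := hsub {0,1} {0,3}
      rwa [(by decide : ({0,1} : Finset (Fin 5)) ∩ {0,3} = {0}),
        (by decide : ({0,1} : Finset (Fin 5)) ∪ {0,3} = {0,1,3})] at h
    have A5 : f ({0,1} : Finset (Fin 5)) + f ({0,1,2,4} : Finset (Fin 5)) ≤ f {0,1,2} + f {0,1,4} := by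
      have h := hsub {0,1,2} {0,1,4}
      rwa [(by decide : ({0,1,2} : Finset (Fin 5)) ∩ {0,1,4} = {0,1}),
        (by decide : ({0,1,2} : Finset (Fin 5)) ∪ {0,1,4} = {0,1,2,4})] at h
    have A6 : f ({0,2} : Finset (Fin 5)) + f ({0,1,2,3} : Finset (Fin 5)) ≤ f {0,1,2} + f {0,2,3} := by
      have h := hsub {0,1,2} {0,2,3}
      rwa [(by decide : ({0,1,2} : Finset (Fin 5)) ∩ {0,2,3} = {0,2}),
        (by decide : ({0,1,2} : Finset (Fin 5)) ∪ {0,2,3} = {0,1,2,3})] at h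
    have A7 : f ({0,3} : Finset (Fin 5)) + f ({0,1,3,4} : Finset (Fin 5)) ≤ f {0,1,3} + f {0,3,4} := by
      have h := hsub {0,1,3} {0,3,4}
      rwa [(by decide : ({0,1,3} : Finset (Fin 5)) ∩ {0,3,4} = {0,3}),
        (by decide : ({0,1,3} : Finset (Fin 5)) ∪ {0,3,4} = {0,1,3,4})] at h
    have A8 : f ({1,3} : Finset (Fin 5)) + f ({0,1,2,3} : Finset (Fin 5)) ≤ f {0,1,3} + f {1,2,3} := by
      have h := hsub {0,1,3} {1,2,3}
      rwa [(by decide : ({0,1,3} : Finset (Fin 5)) ∩ {1,2,3} = {1,3}),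
        (by decide : ({0,1,3} : Finset (Fin 5)) ∪ {1,2,3} = {0,1,2,3})] at h
    have A9 : f ({2,4} : Finset (Fin 5)) + f ({0,2,3,4} : Finset (Fin 5)) ≤ f {0,2,4} + f {2,3,4} := by
      have h := hsub {0,2,4} {2,3,4}
      rwa [(by decide : ({0,2,4} : Finset (Fin 5)) ∩ {2,3,4} = {2,4}),
        (by decide : ({0,2,4} : Finset (Fin 5)) ∪ {2,3,4} = {0,2,3,4})] at h
    have A10 : f ({0,1,3} : Finset (Fin 5)) + f (Finset.univ : Finset (Fin 5)) ≤ f {0,1,2,3} + f {0,1,3,4} := by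
      have h := hsub {0,1,2,3} {0,1,3,4}
      rwa [(by decide : ({0,1,2,3} : Finset (Fin 5)) ∩ {0,1,3,4} = {0,1,3}),
        (by decide : ({0,1,2,3} : Finset (Fin 5)) ∪ {0,1,3,4} = Finset.univ)] at h
    have c0 : f ({0,1,4} : Finset (Fin 5)) = f ({1,4} : Finset (Fin 5)) := by
      have h := hcon 0
      rwa [(by decide : inNbr E5 0 = ({1,4} : Finset (Fin 5))),
        (by decide : insert (0 : Fin 5) ({1,4} : Finset (Fin 5)) = {0,1,4})] at h
    have c1 : f ({0,1,2} : Finset (Fin 5)) = f ({0,2} : Finset (Fin 5)) := by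
      have h := hcon 1
      rwa [(by decide : inNbr E5 1 = ({0,2} : Finset (Fin 5))),
        (by decide : insert (1 : Fin 5) ({0,2} : Finset (Fin 5)) = {0,1,2})] at h
    have c2 : f ({1,2,3} : Finset (Fin 5)) = f ({1,3} : Finset (Fin 5)) := by
      have h := hcon 2
      rwa [(by decide : inNbr E5 2 = ({1,3} : Finset (Fin 5))),
        (by decide : insert (2 : Fin 5) ({1,3} : Finset (Fin 5)) = {1,2,3})] at h
    have c3 : f ({2,3,4} : Finset (Fin 5)) = f ({2,4} : Finset (Fin 5)) := by
      have h := hcon 3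
      rwa [(by decide : inNbr E5 3 = ({2,4} : Finset (Fin 5))),
        (by decide : insert (3 : Fin 5) ({2,4} : Finset (Fin 5)) = {2,3,4})] at h
    have c4 : f ({0,3,4} : Finset (Fin 5)) = f ({0,3} : Finset (Fin 5)) := by
      have h := hcon 4
      rwa [(by decide : inNbr E5 4 = ({0,3} : Finset (Fin 5))),
        (by decide : insert (4 : Fin 5) ({0,3} : Finset (Fin 5)) = {0,3,4})] at h
    have m1 : f ({0,2,3} : Finset (Fin 5)) ≤ f ({0,2,3,4} : Finset (Fin 5)) :=
      hmono _ _ (by decide)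
    have m2 : f ({0,2,4} : Finset (Fin 5)) ≤ f ({0,1,2,4} : Finset (Fin 5)) :=
      hmono _ _ (by decide)
    have n0 := hnorm 0
    have n1 := hnorm 1
    have n2 := hnorm 2
    have n3 := hnorm 3
    have n4 := hnorm 4
    linarith
  refine ⟨main, ?_⟩
  apply Real.sSup_le
  · rintro x ⟨f, hS, hn, hc, rfl⟩
    exact main f hS hn hc
  · norm_num
end

section
/- For the bidirected pentagon C5 and every integer s ≥ 2, the entropy E(C5,s) equals 5/2 if and only if s is a perfect square; consequently the general entropy of the pentagon is E(C5) = 5/2. -/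
open Finset

namespace PentagonProof

variable {V A : Type*} [Fintype V] [DecidableEq V] [Fintype A] [DecidableEq A]

/-- cylinder marginal of `p` on `S`, as a function of full assignments -/
noncomputable def q (p : (V → A) → ℝ) (S : Finset V) (x : V → A) : ℝ :=
  ∑ x' : V → A, if ∀ i ∈ S, x' i = x i then p x' else 0

/-- unnormalized entropy of the marginal on `S` -/
noncomputable def fent (p : (V → A) → ℝ) (S : Finset V) : ℝ :=
  -∑ x : V → A, p x * Real.log (q p S x)

variable {p : (V → A) → ℝ} {S T W : Finset V} {x y : V → A}

lemma q_nonneg (hp : ∀ z, 0 ≤ p z) (S : Finset V) (x : V → A) : 0 ≤ q p S x :=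
  Finset.sum_nonneg fun x' _ => by split <;> simp [hp _]

lemma le_q (hp : ∀ z, 0 ≤ p z) (S : Finset V) (x : V → A) : p x ≤ q p S x := by
  classical
  have h := Finset.single_le_sum
    (f := fun x' : V → A => if ∀ i ∈ S, x' i = x i then p x' else 0)
    (fun x' _ => by split <;> simp [hp _]) (Finset.mem_univ x)
  simpa [q] using h

lemma q_anti (hp : ∀ z, 0 ≤ p z) (hST : S ⊆ T) (x : V → A) : q p T x ≤ q p S x := by
  apply Finset.sum_le_sum
  intro x' _
  by_cases h : ∀ i ∈ T, x' i = x i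
  · rw [if_pos h, if_pos fun i hi => h i (hST hi)]
  · rw [if_neg h]; split <;> simp [hp _]

lemma q_le_one (hp : IsProbDist p) (S : Finset V) (x : V → A) : q p S x ≤ 1 := by
  rw [← hp.2]
  apply Finset.sum_le_sum
  intro x' _
  split <;> simp [hp.1 _]

lemma q_congr (h : ∀ i ∈ S, x i = y i) : q p S x = q p S y := by
  apply Finset.sum_congr rfl
  intro x' _
  have hiff : (∀ i ∈ S, x' i = x i) ↔ (∀ i ∈ S, x' i = y i) := by
    constructor <;> intro hh i hi
    · rw [hh i hi, h i hi]
    · rw [hh i hi, h i hi]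
  rw [if_congr hiff rfl rfl]

lemma q_empty (hp : IsProbDist p) (x : V → A) : q p (∅ : Finset V) x = 1 := by
  simp [q, hp.2]

lemma q_univ (x : V → A) : q p (univ : Finset V) x = p x := by
  unfold q
  have h : ∀ x' : V → A, (∀ i ∈ (univ : Finset V), x' i = x i) ↔ x' = x := by
    intro x'; simp [funext_iff]
  simp only [h]
  simp

/-- counting assignments agreeing with `a` on `S` and with `b` on `T` -/
lemma card_agree (S T : Finset V) (a b : V → A) :
    (Finset.univ.filter fun x : V → A => (∀ i ∈ S, a i = x i) ∧ (∀ i ∈ T, b i = x i)).card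
    = if (∀ i ∈ S ∩ T, a i = b i) then (Fintype.card A) ^ (((S ∪ T)ᶜ : Finset V).card) else 0 := by
  split
  case isTrue hcompat =>
    have hcard : (Finset.univ : Finset ({v // v ∈ (S ∪ T)ᶜ} → A)).card
        = (Fintype.card A) ^ (((S ∪ T)ᶜ : Finset V).card) := by
      rw [Finset.card_univ, Fintype.card_fun, Fintype.card_coe]
    rw [← hcard]
    refine Finset.card_bij'
      (fun x _ => fun c : {v // v ∈ (S ∪ T)ᶜ} => x c.1)
      (fun g _ => fun v : V =>
        if hv : v ∈ S then a v else if hv' : v ∈ T then b v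
        else g ⟨v, by simp [Finset.mem_compl, Finset.mem_union, hv, hv']⟩)
      (fun x hx => Finset.mem_univ _) ?_ ?_ ?_
    · intro g hg
      rw [Finset.mem_filter]
      refine ⟨Finset.mem_univ _, ?_, ?_⟩
      · intro i hi; simp [hi]
      · intro i hi
        by_cases hiS : i ∈ S
        · have hc := hcompat i (Finset.mem_inter.mpr ⟨hiS, hi⟩)
          simp [hiS, ← hc]
        · simp [hiS, hi]
    · intro x hx
      rw [Finset.mem_filter] at hx
      funext v
      by_cases hv : v ∈ S
      · simp [hv, hx.2.1 v hv]
      · by_cases hv' : v ∈ T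
        · simp [hv, hv', hx.2.2 v hv']
        · simp [hv, hv']
    · intro g hg
      funext c
      obtain ⟨v, hv⟩ := c
      have h1 : v ∉ S := fun h => by
        simp only [Finset.mem_compl, Finset.mem_union] at hv; exact hv (Or.inl h)
      have h2 : v ∉ T := fun h => by
        simp only [Finset.mem_compl, Finset.mem_union] at hv; exact hv (Or.inr h)
      simp [h1, h2]
  case isFalse hcompat =>
    rw [Finset.card_eq_zero, Finset.filter_eq_empty_iff]
    rintro x - ⟨h1, h2⟩
    apply hcompat
    intro i hi
    rw [Finset.mem_inter] at hi
    rw [h1 i hi.1, h2 i hi.2]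

lemma card_agree_one (S : Finset V) (a : V → A) :
    (Finset.univ.filter fun x : V → A => ∀ i ∈ S, a i = x i).card
    = (Fintype.card A) ^ ((Sᶜ : Finset V).card) := by
  have h := card_agree S ∅ a a
  rw [if_pos (by simp)] at h
  rw [Finset.union_empty] at h
  rw [← h]
  congr 1
  apply Finset.filter_congr
  intro x _
  simp

end PentagonProof
namespace PentagonProof

variable {V A : Type*} [Fintype V] [DecidableEq V] [Fintype A] [DecidableEq A]
variable {p : (V → A) → ℝ} {S T : Finset V} {x y : V → A}

/-- helper: pull an if out of a sum -/
lemma ite_sum_zero {c : Prop} [Decidable c] {ι : Type*} (s : Finset ι) (F : ι → ℝ) :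
    (if c then (∑ z ∈ s, F z) else 0) = ∑ z ∈ s, (if c then F z else 0) := by
  split <;> simp

/-- the key marginal-sum identity -/
lemma sum_q_filter (p : (V → A) → ℝ) (S T : Finset V) (x' : V → A) :
    (∑ x : V → A, if ∀ i ∈ S, x' i = x i then q p T x else 0)
    = (Fintype.card A) ^ (((S ∪ T)ᶜ : Finset V).card) * q p (S ∩ T) x' := by
  unfold q
  calc (∑ x : V → A, if ∀ i ∈ S, x' i = x i then
          (∑ z : V → A, if ∀ i ∈ T, z i = x i then p z else 0) else 0)
      = ∑ x : V → A, ∑ z : V → A,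
          if (∀ i ∈ S, x' i = x i) ∧ (∀ i ∈ T, z i = x i) then p z else 0 := by
        apply Finset.sum_congr rfl; intro x _
        rw [ite_sum_zero]
        apply Finset.sum_congr rfl; intro z _
        rw [← ite_and]
    _ = ∑ z : V → A, ∑ x : V → A,
          if (∀ i ∈ S, x' i = x i) ∧ (∀ i ∈ T, z i = x i) then p z else 0 :=
        Finset.sum_comm
    _ = ∑ z : V → A,
          (if ∀ i ∈ S ∩ T, x' i = z i then ((Fintype.card A) ^ (((S ∪ T)ᶜ : Finset V).card) : ℝ) else 0) * p z := by
        apply Finset.sum_congr rfl; intro z _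
        rw [← Finset.sum_filter, Finset.sum_const, nsmul_eq_mul, card_agree S T x' z]
        split <;> simp [*]
    _ = (Fintype.card A) ^ (((S ∪ T)ᶜ : Finset V).card) *
          ∑ z : V → A, (if ∀ i ∈ S ∩ T, z i = x' i then p z else 0) := by
        rw [Finset.mul_sum]
        apply Finset.sum_congr rfl; intro z _
        have : (∀ i ∈ S ∩ T, x' i = z i) ↔ (∀ i ∈ S ∩ T, z i = x' i) := by
          constructor <;> intro h i hi <;> exact (h i hi).symm
        rw [if_congr this rfl rfl]
        split <;> simp

/-- grouping: summing a cylinder-measurable function against `q p S` -/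
lemma q_group (p : (V → A) → ℝ) (S : Finset V) (φ : (V → A) → ℝ)
    (hφ : ∀ x y : V → A, (∀ i ∈ S, x i = y i) → φ x = φ y) :
    ∑ x : V → A, q p S x * φ x
      = (Fintype.card A) ^ ((Sᶜ : Finset V).card) * ∑ x : V → A, p x * φ x := by
  unfold q
  calc ∑ x : V → A, (∑ z : V → A, if ∀ i ∈ S, z i = x i then p z else 0) * φ x
      = ∑ x : V → A, ∑ z : V → A, (if ∀ i ∈ S, z i = x i then p z * φ x else 0) := by
        apply Finset.sum_congr rfl; intro x _
        rw [Finset.sum_mul]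
        apply Finset.sum_congr rfl; intro z _
        rw [ite_mul, zero_mul]
    _ = ∑ z : V → A, ∑ x : V → A, (if ∀ i ∈ S, z i = x i then p z * φ x else 0) :=
        Finset.sum_comm
    _ = ∑ z : V → A, ∑ x : V → A, (if ∀ i ∈ S, z i = x i then p z * φ z else 0) := by
        apply Finset.sum_congr rfl; intro z _
        apply Finset.sum_congr rfl; intro x _
        by_cases h : ∀ i ∈ S, z i = x i
        · rw [if_pos h, if_pos h, hφ z x h]
        · rw [if_neg h, if_neg h]
    _ = ∑ z : V → A, (p z * φ z) * ((Fintype.card A) ^ ((Sᶜ : Finset V).card) : ℝ) := by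
        apply Finset.sum_congr rfl; intro z _
        rw [← Finset.sum_filter, Finset.sum_const, nsmul_eq_mul, card_agree_one S z]
        push_cast; ring
    _ = (Fintype.card A) ^ ((Sᶜ : Finset V).card) * ∑ x : V → A, p x * φ x := by
        rw [← Finset.sum_mul]; ring

/-- finite Jensen for `log` -/
lemma jensen_log {ι : Type*} (F : Finset ι) (w t : ι → ℝ) (h0 : ∀ i ∈ F, 0 ≤ w i)
    (h1 : ∑ i ∈ F, w i = 1) (ht : ∀ i ∈ F, w i ≠ 0 → 0 < t i) :
    ∑ i ∈ F, w i * Real.log (t i) ≤ Real.log (∑ i ∈ F, w i * t i) := by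
  classical
  have key : ∀ g : ι → ℝ, ∑ i ∈ F.filter (fun i => w i ≠ 0), w i * g i = ∑ i ∈ F, w i * g i := by
    intro g
    apply Finset.sum_filter_of_ne
    intro i _ h
    intro hw; apply h; rw [hw, zero_mul]
  have h1' : ∑ i ∈ F.filter (fun i => w i ≠ 0), w i = 1 := by
    rw [Finset.sum_filter_ne_zero]; exact h1
  have hj := (strictConcaveOn_log_Ioi.concaveOn).le_map_sum
    (t := F.filter (fun i => w i ≠ 0)) (w := w) (p := t)
    (fun i hi => h0 i (Finset.mem_filter.mp hi).1) h1'
    (fun i hi => ht i (Finset.mem_filter.mp hi).1 (Finset.mem_filter.mp hi).2)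
  simp only [smul_eq_mul] at hj
  rw [key] at hj
  rw [key] at hj
  exact hj

/-- entropy is at most log of the support size -/
lemma sum_negMulLog_le {ι : Type*} [Fintype ι] (w : ι → ℝ) (h0 : ∀ i, 0 ≤ w i)
    (h1 : ∑ i : ι, w i = 1) (F : Finset ι) (hF : ∀ i, w i ≠ 0 → i ∈ F) :
    ∑ i : ι, Real.negMulLog (w i) ≤ Real.log F.card := by
  classical
  have hzero : ∀ i ∈ Finset.univ, i ∉ F → Real.negMulLog (w i) = 0 := by
    intro i _ hi
    have : w i = 0 := by by_contra h; exact hi (hF i h)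
    simp [this]
  have hzero2 : ∀ i ∈ Finset.univ, i ∉ F → w i = 0 := by
    intro i _ hi; by_contra h; exact hi (hF i h)
  have e1 : ∑ i : ι, Real.negMulLog (w i) = ∑ i ∈ F, w i * Real.log (w i)⁻¹ := by
    rw [← Finset.sum_subset F.subset_univ hzero]
    apply Finset.sum_congr rfl; intro i _
    rw [Real.log_inv, Real.negMulLog_def]; ring
  have e2 : ∑ i ∈ F, w i = 1 := by
    rw [Finset.sum_subset F.subset_univ hzero2]; exact h1
  rw [e1]
  have hj := jensen_log F w (fun i => (w i)⁻¹) (fun i _ => h0 i) e2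
    (fun i _ hw => inv_pos.mpr (lt_of_le_of_ne (h0 i) (Ne.symm hw)))
  refine hj.trans ?_
  apply Real.log_le_log
  · -- positivity of the inner sum
    obtain ⟨i0, hi0⟩ : ∃ i, w i ≠ 0 := by
      by_contra h; push_neg at h
      rw [Finset.sum_eq_zero (fun i _ => h i)] at h1; norm_num at h1
    have hmem := hF i0 hi0
    have : (0:ℝ) < w i0 * (w i0)⁻¹ := by
      rw [mul_inv_cancel₀ hi0]; norm_num
    apply lt_of_lt_of_le this
    apply Finset.single_le_sum (f := fun i => w i * (w i)⁻¹) _ hmem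
    intro i _
    show 0 ≤ w i * (w i)⁻¹
    rcases eq_or_ne (w i) 0 with h|h
    · simp [h]
    · rw [mul_inv_cancel₀ h]; norm_num
  · calc ∑ i ∈ F, w i * (w i)⁻¹ ≤ ∑ _i ∈ F, (1:ℝ) := by
          apply Finset.sum_le_sum; intro i _
          rcases eq_or_ne (w i) 0 with h|h
          · simp [h]
          · rw [mul_inv_cancel₀ h]
        _ = F.card := by rw [Finset.sum_const]; simp

end PentagonProof
namespace PentagonProof

variable {V A : Type*} [Fintype V] [DecidableEq V] [Fintype A] [DecidableEq A]
variable {p : (V → A) → ℝ} {S T : Finset V} {x y : V → A}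

lemma fent_empty (hp : IsProbDist p) : fent p (∅ : Finset V) = 0 := by
  unfold fent
  rw [Finset.sum_eq_zero, neg_zero]
  intro x _
  rw [q_empty hp, Real.log_one, mul_zero]

lemma fent_mono (hp : IsProbDist p) (hST : S ⊆ T) : fent p S ≤ fent p T := by
  unfold fent
  rw [neg_le_neg_iff]
  apply Finset.sum_le_sum
  intro x _
  rcases eq_or_lt_of_le (hp.1 x) with h|h
  · rw [← h]; ring_nf; exact le_refl _
  · apply mul_le_mul_of_nonneg_left _ (le_of_lt h)
    apply Real.log_le_log
    · exact lt_of_lt_of_le h (le_q hp.1 T x)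
    · exact q_anti hp.1 hST x

lemma q_pos_of_p_pos (hp : ∀ z, 0 ≤ p z) (h : p x ≠ 0) (S : Finset V) : 0 < q p S x :=
  lt_of_lt_of_le (lt_of_le_of_ne (hp x) (Ne.symm h)) (le_q hp S x)

/-- unfolding a `q`-weighted sum by conditioning on the `S`-cylinder -/
lemma swap_q (p : (V → A) → ℝ) (S : Finset V) (ψ : (V → A) → ℝ) :
    ∑ x : V → A, q p S x * ψ x
    = ∑ z : V → A, p z * (∑ x : V → A, if ∀ i ∈ S, z i = x i then ψ x else 0) := by
  unfold q
  calc ∑ x : V → A, (∑ z : V → A, if ∀ i ∈ S, z i = x i then p z else 0) * ψ x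
      = ∑ x : V → A, ∑ z : V → A, (if ∀ i ∈ S, z i = x i then p z * ψ x else 0) := by
        apply Finset.sum_congr rfl; intro x _
        rw [Finset.sum_mul]
        apply Finset.sum_congr rfl; intro z _
        rw [ite_mul, zero_mul]
    _ = ∑ z : V → A, ∑ x : V → A, (if ∀ i ∈ S, z i = x i then p z * ψ x else 0) :=
        Finset.sum_comm
    _ = ∑ z : V → A, p z * (∑ x : V → A, if ∀ i ∈ S, z i = x i then ψ x else 0) := by
        apply Finset.sum_congr rfl; intro z _
        rw [Finset.mul_sum]
        apply Finset.sum_congr rfl; intro x _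
        rw [mul_ite, mul_zero]

lemma fent_submod (hp : IsProbDist p) [Nonempty A] (S T : Finset V) :
    fent p (S ∪ T) + fent p (S ∩ T) ≤ fent p S + fent p T := by
  classical
  set U := S ∪ T with hU
  set W := S ∩ T with hW
  have hWS : W ⊆ S := Finset.inter_subset_left
  set k : ℝ := (Fintype.card A : ℝ) ^ ((Uᶜ : Finset V).card) with hk
  have hkpos : 0 < k := by
    rw [hk]
    apply pow_pos
    exact_mod_cast Fintype.card_pos
  set r : (V → A) → ℝ := fun x => q p S x * q p T x / (q p U x * q p W x) with hr
  have hrnonneg : ∀ x, 0 ≤ r x := by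
    intro x
    rw [hr]
    have h1 := q_nonneg hp.1 S x
    have h2 := q_nonneg hp.1 T x
    have h3 := q_nonneg hp.1 U x
    have h4 := q_nonneg hp.1 W x
    positivity
  -- Step 1 : ∑ p x * r x ≤ 1
  have hT1 : ∑ x : V → A, p x * r x ≤ 1 := by
    have hrdep : ∀ x y : V → A, (∀ i ∈ U, x i = y i) → r x = r y := by
      intro x y h
      rw [hr]
      dsimp only
      rw [q_congr (fun i hi => h i (Finset.mem_union_left _ hi)),
          q_congr (fun i hi => h i (Finset.mem_union_right _ hi)),
          q_congr (S := U) h,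
          q_congr (S := W) (fun i hi => h i (Finset.mem_union_left _ (hWS hi)))]
    have hgroup := q_group p U r hrdep
    have hstep2 : ∑ x : V → A, q p U x * r x ≤ ∑ x : V → A, q p S x * (q p T x / q p W x) := by
      apply Finset.sum_le_sum
      intro x _
      rcases eq_or_ne (q p U x) 0 with h|h
      · rw [h, zero_mul]
        have h1 := q_nonneg hp.1 S x
        have h2 := q_nonneg hp.1 T x
        have h3 := q_nonneg hp.1 W x
        positivity
      · rw [hr]
        dsimp only
        rw [mul_div_assoc', mul_div_mul_left _ _ h, mul_div_assoc]
    have hstep3 : ∑ x : V → A, q p S x * (q p T x / q p W x) ≤ k := by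
      rw [swap_q p S (fun x => q p T x / q p W x)]
      have inner_eq : ∀ z : V → A,
          (∑ x : V → A, if ∀ i ∈ S, z i = x i then q p T x / q p W x else 0)
          = (k * q p W z) / q p W z := by
        intro z
        have hsplit : (∑ x : V → A, if ∀ i ∈ S, z i = x i then q p T x / q p W x else 0)
            = (∑ x : V → A, if ∀ i ∈ S, z i = x i then q p T x else 0) / q p W z := by
          rw [Finset.sum_div]
          apply Finset.sum_congr rfl; intro x _
          by_cases h : ∀ i ∈ S, z i = x i
          · rw [if_pos h, if_pos h]
            rw [q_congr (S := W) (fun i hi => (h i (hWS hi)).symm)]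
          · rw [if_neg h, if_neg h, zero_div]
        rw [hsplit, sum_q_filter p S T z]
      calc ∑ z : V → A, p z * (∑ x : V → A, if ∀ i ∈ S, z i = x i then q p T x / q p W x else 0)
          ≤ ∑ z : V → A, p z * k := by
            apply Finset.sum_le_sum
            intro z _
            rw [inner_eq z]
            rcases eq_or_ne (q p W z) 0 with h|h
            · rw [h, div_zero, mul_zero]
              exact mul_nonneg (hp.1 z) (le_of_lt hkpos)
            · rw [mul_div_assoc, div_self h, mul_one]
        _ = k := by rw [← Finset.sum_mul, hp.2, one_mul]
    have hle : k * (∑ x : V → A, p x * r x) ≤ k * 1 := by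
      rw [mul_one]
      exact le_trans (le_of_eq hgroup.symm) (le_trans hstep2 hstep3)
    exact le_of_mul_le_mul_left hle hkpos
  -- Step 2 : rewrite the difference of entropies and apply Jensen
  have key : ∑ x : V → A, p x * Real.log (r x)
      = ((∑ x : V → A, p x * Real.log (q p S x)) + (∑ x : V → A, p x * Real.log (q p T x)))
        - ((∑ x : V → A, p x * Real.log (q p U x)) + (∑ x : V → A, p x * Real.log (q p W x))) := by
    rw [← Finset.sum_add_distrib, ← Finset.sum_add_distrib, ← Finset.sum_sub_distrib]
    apply Finset.sum_congr rfl
    intro x _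
    rcases eq_or_ne (p x) 0 with h|h
    · rw [h]; ring
    · have h1 := q_pos_of_p_pos hp.1 h S
      have h2 := q_pos_of_p_pos hp.1 h T
      have h3 := q_pos_of_p_pos hp.1 h U
      have h4 := q_pos_of_p_pos hp.1 h W
      rw [hr]
      dsimp only
      rw [Real.log_div (by positivity) (by positivity), Real.log_mul (ne_of_gt h1) (ne_of_gt h2),
        Real.log_mul (ne_of_gt h3) (ne_of_gt h4)]
      ring
  have hjen : ∑ x : V → A, p x * Real.log (r x) ≤ 0 := by
    classical
    have hfilter : ∀ g : (V → A) → ℝ,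
        ∑ x ∈ Finset.univ.filter (fun x : V → A => p x ≠ 0), p x * g x
        = ∑ x : V → A, p x * g x := by
      intro g
      apply Finset.sum_filter_of_ne
      intro x _ hne hpx
      exact hne (by rw [hpx, zero_mul])
    have h1' : ∑ x ∈ Finset.univ.filter (fun x : V → A => p x ≠ 0), p x = 1 := by
      rw [Finset.sum_filter_ne_zero]; exact hp.2
    have hj := jensen_log (Finset.univ.filter (fun x : V → A => p x ≠ 0)) p r
      (fun x _ => hp.1 x) h1'
      (fun x _ hne => by
        rw [hr]; dsimp only
        have h1 := q_pos_of_p_pos hp.1 hne S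
        have h2 := q_pos_of_p_pos hp.1 hne T
        have h3 := q_pos_of_p_pos hp.1 hne U
        have h4 := q_pos_of_p_pos hp.1 hne W
        positivity)
    rw [hfilter (fun x => Real.log (r x)), hfilter r] at hj
    refine hj.trans (Real.log_nonpos ?_ hT1)
    apply Finset.sum_nonneg
    intro x _
    exact mul_nonneg (hp.1 x) (hrnonneg x)
  rw [key] at hjen
  unfold fent
  linarith

end PentagonProof
namespace PentagonProof

variable {V A : Type*} [Fintype V] [DecidableEq V] [Fintype A] [DecidableEq A]
variable {p : (V → A) → ℝ} {S T : Finset V} {x y : V → A}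

lemma marg_eq_q (p : (V → A) → ℝ) (S : Finset V) (y : (↥S → A)) (x : V → A)
    (hxy : ∀ i : ↥S, x i.1 = y i) : marginalPMF p S y = q p S x := by
  unfold marginalPMF q
  apply Finset.sum_congr rfl; intro x' _
  have hiff : (∀ i : ↥S, x' i.1 = y i) ↔ (∀ i ∈ S, x' i = x i) := by
    constructor
    · intro h i hi
      rw [h ⟨i, hi⟩]
      exact (hxy ⟨i, hi⟩).symm
    · intro h i
      rw [h i.1 i.2, hxy i]
  rw [if_congr hiff rfl rfl]

lemma marg_nonneg (hp : ∀ z, 0 ≤ p z) (S : Finset V) (y : (↥S → A)) :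
    0 ≤ marginalPMF p S y :=
  Finset.sum_nonneg fun x' _ => by split <;> simp [hp _]

lemma marg_sum_one (hp : IsProbDist p) (S : Finset V) :
    ∑ y : (↥S → A), marginalPMF p S y = 1 := by
  unfold marginalPMF
  rw [Finset.sum_comm]
  rw [← hp.2]
  apply Finset.sum_congr rfl; intro x _
  have hcond : ∀ y : (↥S → A), (∀ i : ↥S, x i.1 = y i) ↔ ((fun i : ↥S => x i.1) = y) := by
    intro y; rw [funext_iff]
  calc ∑ y : (↥S → A), (if ∀ i : ↥S, x i.1 = y i then p x else 0)
      = ∑ y : (↥S → A), (if (fun i : ↥S => x i.1) = y then p x else 0) := by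
        apply Finset.sum_congr rfl; intro y _
        rw [if_congr (hcond y) rfl rfl]
    _ = p x := by rw [Finset.sum_ite_eq]; simp

lemma sum_negMulLog_marg [Nonempty A] (p : (V → A) → ℝ) (S : Finset V) :
    ∑ y : (↥S → A), Real.negMulLog (marginalPMF p S y) = fent p S := by
  classical
  unfold fent
  rw [← Finset.sum_fiberwise_of_maps_to
    (g := fun x : V → A => (fun i : ↥S => x i.1)) (t := Finset.univ)
    (fun x _ => Finset.mem_univ _) (fun x => p x * Real.log (q p S x))]
  rw [← Finset.sum_neg_distrib]
  apply Finset.sum_congr rfl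
  intro y _
  set x₀ : V → A := fun v => if h : v ∈ S then y ⟨v, h⟩ else Classical.arbitrary A with hx₀
  have hρ : ∀ i : ↥S, x₀ i.1 = y i := by
    intro i
    rw [hx₀]
    simp [i.2]
  have hmarg : marginalPMF p S y = q p S x₀ := marg_eq_q p S y x₀ hρ
  have hfilt : ∀ x ∈ Finset.univ.filter (fun x : V → A => (fun i : ↥S => x i.1) = y),
      q p S x = marginalPMF p S y := by
    intro x hx
    rw [Finset.mem_filter] at hx
    exact (marg_eq_q p S y x (fun i => congrFun hx.2 i)).symm
  have hsum : ∑ x ∈ Finset.univ.filter (fun x : V → A => (fun i : ↥S => x i.1) = y), p x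
      = marginalPMF p S y := by
    unfold marginalPMF
    rw [Finset.sum_filter]
    apply Finset.sum_congr rfl; intro x _
    have : ((fun i : ↥S => x i.1) = y) ↔ (∀ i : ↥S, x i.1 = y i) := by
      rw [funext_iff]
    rw [if_congr this rfl rfl]
  symm
  calc -∑ x ∈ Finset.univ.filter (fun x : V → A => (fun i : ↥S => x i.1) = y),
          p x * Real.log (q p S x)
      = -∑ x ∈ Finset.univ.filter (fun x : V → A => (fun i : ↥S => x i.1) = y),
          p x * Real.log (marginalPMF p S y) := by
        congr 1
        apply Finset.sum_congr rfl; intro x hx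
        rw [hfilt x hx]
    _ = -(marginalPMF p S y * Real.log (marginalPMF p S y)) := by
        rw [← Finset.sum_mul, hsum]
    _ = Real.negMulLog (marginalPMF p S y) := by
        rw [Real.negMulLog_def]; ring

lemma hent_eq [Nonempty A] (s : ℕ) (p : (V → A) → ℝ) (S : Finset V) :
    Hent s p S = fent p S / Real.log s := by
  unfold Hent
  rw [sum_negMulLog_marg]

lemma fent_univ_eq : fent p (Finset.univ : Finset V) = ∑ x : V → A, Real.negMulLog (p x) := by
  unfold fent
  rw [← Finset.sum_neg_distrib]
  apply Finset.sum_congr rfl; intro x _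
  rw [q_univ, Real.negMulLog_def]
  ring

/-- zero conditional entropy implies determinism on the support -/
lemma det_of_fent_eq (hp : IsProbDist p) {j : V} {N : Finset V}
    (h : fent p (insert j N) = fent p N) :
    ∀ x y : V → A, p x ≠ 0 → p y ≠ 0 → (∀ i ∈ N, x i = y i) → x j = y j := by
  classical
  have hterm : ∀ x : V → A, p x ≠ 0 → q p (insert j N) x = q p N x := by
    have h' : ∑ x : V → A, p x * Real.log (q p (insert j N) x)
        = ∑ x : V → A, p x * Real.log (q p N x) := by
      unfold fent at h
      linarith [h]
    have hsum : ∑ x : V → A,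
        (p x * Real.log (q p N x) - p x * Real.log (q p (insert j N) x)) = 0 := by
      rw [Finset.sum_sub_distrib, h']
      ring
    have hnn : ∀ x ∈ (Finset.univ : Finset (V → A)),
        0 ≤ p x * Real.log (q p N x) - p x * Real.log (q p (insert j N) x) := by
      intro x _
      rcases eq_or_ne (p x) 0 with hz|hz
      · rw [hz]; ring_nf; exact le_refl _
      · have h1 := q_pos_of_p_pos hp.1 hz (insert j N)
        have hmono := q_anti hp.1 (Finset.subset_insert j N) x
        have hlog := Real.log_le_log h1 hmono
        have hppos := lt_of_le_of_ne (hp.1 x) (Ne.symm hz)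
        nlinarith
    have hz := (Finset.sum_eq_zero_iff_of_nonneg hnn).mp hsum
    intro x hx
    have hx0 := hz x (Finset.mem_univ x)
    have h1 : 0 < q p (insert j N) x := q_pos_of_p_pos hp.1 hx _
    have h2 : 0 < q p N x := q_pos_of_p_pos hp.1 hx _
    have hppos := lt_of_le_of_ne (hp.1 x) (Ne.symm hx)
    have hlog : Real.log (q p N x) = Real.log (q p (insert j N) x) := by
      have hfac : p x * (Real.log (q p N x) - Real.log (q p (insert j N) x)) = 0 := by
        linear_combination hx0
      rcases mul_eq_zero.mp hfac with hc|hc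
      · exact absurd hc hx
      · linarith
    rw [← Real.exp_log h1, ← Real.exp_log h2, hlog]
  intro x y hx hy hagree
  by_contra hne
  have hq := hterm x hx
  have hzero : ∑ z : V → A, ((if ∀ i ∈ N, z i = x i then p z else 0)
      - (if ∀ i ∈ insert j N, z i = x i then p z else 0)) = 0 := by
    rw [Finset.sum_sub_distrib]
    unfold q at hq
    rw [hq]
    ring
  have hnn : ∀ z ∈ (Finset.univ : Finset (V → A)),
      0 ≤ (if ∀ i ∈ N, z i = x i then p z else 0)
        - (if ∀ i ∈ insert j N, z i = x i then p z else 0) := by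
    intro z _
    by_cases h2 : ∀ i ∈ insert j N, z i = x i
    · rw [if_pos h2, if_pos (fun i hi => h2 i (Finset.mem_insert_of_mem hi))]
      simp
    · rw [if_neg h2]
      split <;> simp [hp.1 z]
  have hyz := (Finset.sum_eq_zero_iff_of_nonneg hnn).mp hzero y (Finset.mem_univ y)
  rw [if_pos (fun i hi => (hagree i hi).symm), if_neg] at hyz
  · exact hy (by linarith)
  · intro hall
    exact hne ((hall j (Finset.mem_insert_self j N)).symm)

/-- determinism on the support implies zero conditional entropy -/
lemma fent_eq_of_det (hp : IsProbDist p) {j : V} {N : Finset V}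
    (det : ∀ x y : V → A, p x ≠ 0 → p y ≠ 0 → (∀ i ∈ N, x i = y i) → x j = y j) :
    fent p (insert j N) = fent p N := by
  unfold fent
  congr 1
  apply Finset.sum_congr rfl; intro x _
  rcases eq_or_ne (p x) 0 with h|h
  · rw [h]; ring
  · have hq : q p (insert j N) x = q p N x := by
      unfold q
      apply Finset.sum_congr rfl; intro z _
      by_cases h2 : ∀ i ∈ insert j N, z i = x i
      · rw [if_pos h2, if_pos (fun i hi => h2 i (Finset.mem_insert_of_mem hi))]
      · by_cases h1 : ∀ i ∈ N, z i = x i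
        · rw [if_neg h2, if_pos h1]
          rcases eq_or_ne (p z) 0 with h3|h3
          · rw [h3]
          · exfalso
            apply h2
            intro i hi
            rcases Finset.mem_insert.mp hi with rfl|hi'
            · exact det z x h3 h h1
            · exact h1 i hi'
        · rw [if_neg h2, if_neg h1]
    rw [hq]

end PentagonProof
namespace PentagonProof

/-- in-neighbourhoods in the pentagon -/
lemma inNbr_E5_0 : inNbr E5 0 = ({1, 4} : Finset (Fin 5)) := by decide
lemma inNbr_E5_1 : inNbr E5 1 = ({0, 2} : Finset (Fin 5)) := by decide
lemma inNbr_E5_2 : inNbr E5 2 = ({1, 3} : Finset (Fin 5)) := by decide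
lemma inNbr_E5_3 : inNbr E5 3 = ({2, 4} : Finset (Fin 5)) := by decide
lemma inNbr_E5_4 : inNbr E5 4 = ({0, 3} : Finset (Fin 5)) := by decide

/-- the Shannon-inequality certificate for the pentagon -/
lemma pentagon_bound (f : Finset (Fin 5) → ℝ) (L : ℝ)
    (h0 : f ∅ = 0)
    (hmono : ∀ S T : Finset (Fin 5), S ⊆ T → f S ≤ f T)
    (hsub : ∀ S T : Finset (Fin 5), f (S ∪ T) + f (S ∩ T) ≤ f S + f T)
    (hsing : ∀ i : Fin 5, f {i} ≤ L)
    (hcon : ∀ j : Fin 5, f (insert j (inNbr E5 j)) = f (inNbr E5 j)) :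
    f Finset.univ ≤ 5 / 2 * L := by
  have huniv : (Finset.univ : Finset (Fin 5)) = {0, 1, 2, 3, 4} := by decide
  have mono1 : f {0,2,4} ≤ f {0,2,3,4} := hmono _ _ (by decide)
  have mono2 : f {1,2,4} ≤ f {0,1,2,4} := hmono _ _ (by decide)
  have sub1 : f {0,2,3,4} + f {3,4} ≤ f {0,3,4} + f {2,3,4} := by
    have h := hsub {0,3,4} {2,3,4}
    rw [show ({0,3,4} : Finset (Fin 5)) ∪ {2,3,4} = {0,2,3,4} by decide,
        show ({0,3,4} : Finset (Fin 5)) ∩ {2,3,4} = {3,4} by decide] at h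
    exact h
  have sub2 : f {0,1,2,3,4} + f {1,3,4} ≤ f {0,1,3,4} + f {1,2,3,4} := by
    have h := hsub {0,1,3,4} {1,2,3,4}
    rw [show ({0,1,3,4} : Finset (Fin 5)) ∪ {1,2,3,4} = {0,1,2,3,4} by decide,
        show ({0,1,3,4} : Finset (Fin 5)) ∩ {1,2,3,4} = {1,3,4} by decide] at h
    exact h
  have sub3 : f {0,3} + f ∅ ≤ f {0} + f {3} := by
    have h := hsub {0} {3}
    rw [show ({0} : Finset (Fin 5)) ∪ {3} = {0,3} by decide,
        show ({0} : Finset (Fin 5)) ∩ {3} = ∅ by decide] at h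
    exact h
  have sub4 : f {0,1,3,4} + f {1,4} ≤ f {0,1,4} + f {1,3,4} := by
    have h := hsub {0,1,4} {1,3,4}
    rw [show ({0,1,4} : Finset (Fin 5)) ∪ {1,3,4} = {0,1,3,4} by decide,
        show ({0,1,4} : Finset (Fin 5)) ∩ {1,3,4} = {1,4} by decide] at h
    exact h
  have sub5 : f {1,3} + f ∅ ≤ f {1} + f {3} := by
    have h := hsub {1} {3}
    rw [show ({1} : Finset (Fin 5)) ∪ {3} = {1,3} by decide,
        show ({1} : Finset (Fin 5)) ∩ {3} = ∅ by decide] at h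
    exact h
  have sub6 : f {1,2,3,4} + f {2,4} ≤ f {1,2,4} + f {2,3,4} := by
    have h := hsub {1,2,4} {2,3,4}
    rw [show ({1,2,4} : Finset (Fin 5)) ∪ {2,3,4} = {1,2,3,4} by decide,
        show ({1,2,4} : Finset (Fin 5)) ∩ {2,3,4} = {2,4} by decide] at h
    exact h
  have sub7 : f {0,1,2,4} + f {0,2} ≤ f {0,1,2} + f {0,2,4} := by
    have h := hsub {0,1,2} {0,2,4}
    rw [show ({0,1,2} : Finset (Fin 5)) ∪ {0,2,4} = {0,1,2,4} by decide,
        show ({0,1,2} : Finset (Fin 5)) ∩ {0,2,4} = {0,2} by decide] at h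
    exact h
  have sub8 : f {1,2,3,4} + f {2,3} ≤ f {1,2,3} + f {2,3,4} := by
    have h := hsub {1,2,3} {2,3,4}
    rw [show ({1,2,3} : Finset (Fin 5)) ∪ {2,3,4} = {1,2,3,4} by decide,
        show ({1,2,3} : Finset (Fin 5)) ∩ {2,3,4} = {2,3} by decide] at h
    exact h
  have sub9 : f {2,4} + f ∅ ≤ f {2} + f {4} := by
    have h := hsub {2} {4}
    rw [show ({2} : Finset (Fin 5)) ∪ {4} = {2,4} by decide,
        show ({2} : Finset (Fin 5)) ∩ {4} = ∅ by decide] at h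
    exact h
  have sub10 : f {2,3,4} + f {3} ≤ f {2,3} + f {3,4} := by
    have h := hsub {2,3} {3,4}
    rw [show ({2,3} : Finset (Fin 5)) ∪ {3,4} = {2,3,4} by decide,
        show ({2,3} : Finset (Fin 5)) ∩ {3,4} = {3} by decide] at h
    exact h
  have con0 : f {0,1,4} = f {1,4} := by
    have h := hcon 0
    rw [inNbr_E5_0, show insert (0 : Fin 5) ({1,4} : Finset (Fin 5)) = {0,1,4} by decide] at h
    exact h
  have con1 : f {0,1,2} = f {0,2} := by
    have h := hcon 1
    rw [inNbr_E5_1, show insert (1 : Fin 5) ({0,2} : Finset (Fin 5)) = {0,1,2} by decide] at h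
    exact h
  have con2 : f {1,2,3} = f {1,3} := by
    have h := hcon 2
    rw [inNbr_E5_2, show insert (2 : Fin 5) ({1,3} : Finset (Fin 5)) = {1,2,3} by decide] at h
    exact h
  have con3 : f {2,3,4} = f {2,4} := by
    have h := hcon 3
    rw [inNbr_E5_3, show insert (3 : Fin 5) ({2,4} : Finset (Fin 5)) = {2,3,4} by decide] at h
    exact h
  have con4 : f {0,3,4} = f {0,3} := by
    have h := hcon 4
    rw [inNbr_E5_4, show insert (4 : Fin 5) ({0,3} : Finset (Fin 5)) = {0,3,4} by decide] at h
    exact h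
  have s0 := hsing 0
  have s1 := hsing 1
  have s2 := hsing 2
  have s3 := hsing 3
  have s4 := hsing 4
  rw [huniv]
  linarith

variable {s : ℕ}

/-- the Shannon bound: any constrained distribution on the pentagon has entropy ≤ 5/2 -/
lemma hent_le_five_half (hs : 2 ≤ s) (p : (Fin 5 → Fin s) → ℝ)
    (hp : IsProbDist p) (hc : InfoConstraints E5 s p) :
    Hent s p Finset.univ ≤ 5 / 2 := by
  haveI : Nonempty (Fin s) := ⟨⟨0, by omega⟩⟩
  have hlogs : 0 < Real.log s :=
    Real.log_pos (by exact_mod_cast lt_of_lt_of_le one_lt_two (by exact_mod_cast hs))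
  have hcon : ∀ j : Fin 5, fent p (insert j (inNbr E5 j)) = fent p (inNbr E5 j) := by
    intro j
    have h := hc j
    rw [hent_eq s p, hent_eq s p] at h
    have h' : (fent p (insert j (inNbr E5 j)) - fent p (inNbr E5 j)) / Real.log s = 0 := by
      rw [sub_div]; exact h
    have := (div_eq_zero_iff.mp h').resolve_right (ne_of_gt hlogs)
    linarith
  have hsing : ∀ i : Fin 5, fent p {i} ≤ Real.log s := by
    intro i
    rw [← sum_negMulLog_marg]
    have hb := sum_negMulLog_le (marginalPMF p {i}) (marg_nonneg hp.1 _) (marg_sum_one hp _)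
      Finset.univ (fun _ _ => Finset.mem_univ _)
    refine hb.trans ?_
    have hcard : (Finset.univ : Finset ((↥({i} : Finset (Fin 5))) → Fin s)).card = s := by
      rw [Finset.card_univ, Fintype.card_fun, Fintype.card_coe, Finset.card_singleton,
        Fintype.card_fin, pow_one]
    rw [hcard]
  have hbound := pentagon_bound (fent p) (Real.log s) (fent_empty hp)
    (fun S T hST => fent_mono hp hST) (fun S T => fent_submod hp S T) hsing hcon
  rw [hent_eq s p, div_le_iff₀ hlogs]
  linarith

end PentagonProof
namespace PentagonProof

variable {V A : Type*} [Fintype V] [DecidableEq V] [Fintype A] [DecidableEq A]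
variable {p : (V → A) → ℝ}

/-- choice of a value with nonzero weight -/
noncomputable def pick [Nonempty A] (F : A → ℝ) : A :=
  if h : ∃ a, F a ≠ 0 then h.choose else Classical.arbitrary A

lemma pick_spec [Nonempty A] {F : A → ℝ} (h : ∃ a, F a ≠ 0) : F (pick F) ≠ 0 := by
  unfold pick
  rw [dif_pos h]
  exact h.choose_spec

/-- `InfoConstraints` from support-determinism -/
lemma infoConstraints_of_det [Nonempty A] {E : V → V → Prop} [DecidableRel E] (s : ℕ)
    (hp : IsProbDist p)
    (det : ∀ j : V, ∀ x y : V → A, p x ≠ 0 → p y ≠ 0 →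
      (∀ i ∈ inNbr E j, x i = y i) → x j = y j) :
    InfoConstraints E s p := by
  intro j
  rw [hent_eq s p, hent_eq s p, fent_eq_of_det hp (det j), sub_self]

/-- `fent`-form of the information constraints -/
lemma fcon_of_infoConstraints {s : ℕ} (hs : 2 ≤ s) {p : (Fin 5 → Fin s) → ℝ}
    (hc : InfoConstraints E5 s p) (j : Fin 5) :
    fent p (insert j (inNbr E5 j)) = fent p (inNbr E5 j) := by
  haveI : Nonempty (Fin s) := ⟨⟨0, by omega⟩⟩
  have hlogs : 0 < Real.log s :=
    Real.log_pos (by exact_mod_cast lt_of_lt_of_le one_lt_two (by exact_mod_cast hs))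
  have h := hc j
  rw [hent_eq s p, hent_eq s p] at h
  have h' : (fent p (insert j (inNbr E5 j)) - fent p (inNbr E5 j)) / Real.log s = 0 := by
    rw [sub_div]; exact h
  have := (div_eq_zero_iff.mp h').resolve_right (ne_of_gt hlogs)
  linarith

lemma not_self_inNbr_E5 : ∀ j : Fin 5, j ∉ inNbr E5 j := by decide

/-- extracting a strategy from a constrained distribution -/
noncomputable def stratOf {s : ℕ} [NeZero s] (p : (Fin 5 → Fin s) → ℝ) :
    Fin 5 → (Fin 5 → Fin s) → Fin s :=
  fun j x => pick (fun a => q p (insert j (inNbr E5 j)) (Function.update x j a))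

lemma stratOf_isStrategy {s : ℕ} [NeZero s] (p : (Fin 5 → Fin s) → ℝ) :
    IsStrategy E5 (stratOf p) := by
  intro j x y hagree
  unfold stratOf
  have hfun : (fun a => q p (insert j (inNbr E5 j)) (Function.update x j a))
      = (fun a => q p (insert j (inNbr E5 j)) (Function.update y j a)) := by
    funext a
    apply q_congr
    intro i hi
    rcases Finset.mem_insert.mp hi with rfl|hi'
    · rw [Function.update_self, Function.update_self]
    · have hij : i ≠ j := fun h => not_self_inNbr_E5 j (h ▸ hi')
      rw [Function.update_of_ne hij, Function.update_of_ne hij]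
      apply hagree
      have := Finset.mem_filter.mp hi'
      exact this.2
  rw [hfun]

lemma stratOf_correct {s : ℕ} [NeZero s] (hs : 2 ≤ s) {p : (Fin 5 → Fin s) → ℝ}
    (hp : IsProbDist p) (hc : InfoConstraints E5 s p) :
    ∀ x : Fin 5 → Fin s, p x ≠ 0 → ∀ j : Fin 5, stratOf (s := s) p j x = x j := by
  intro x hx j
  have hdet := det_of_fent_eq hp (fcon_of_infoConstraints hs hc j)
  have hN : inNbr E5 j = inNbr E5 j := rfl
  have hex : ∃ a : Fin s, q p (insert j (inNbr E5 j)) (Function.update x j a) ≠ 0 := by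
    refine ⟨x j, ?_⟩
    rw [Function.update_eq_self]
    exact ne_of_gt (q_pos_of_p_pos hp.1 hx _)
  have hq := pick_spec hex
  set c := pick (fun a => q p (insert j (inNbr E5 j)) (Function.update x j a)) with hcdef
  obtain ⟨z, -, hz⟩ := Finset.exists_ne_zero_of_sum_ne_zero hq
  have hcond : ∀ i ∈ insert j (inNbr E5 j), z i = Function.update x j c i := by
    by_contra hcnd
    rw [if_neg hcnd] at hz
    exact hz rfl
  have hpz : p z ≠ 0 := by
    rw [if_pos hcond] at hz
    exact hz
  have hzj : z j = c := by
    have := hcond j (Finset.mem_insert_self j (inNbr E5 j))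
    rwa [Function.update_self] at this
  have hzx : ∀ i ∈ inNbr E5 j, z i = x i := by
    intro i hi
    have hij : i ≠ j := fun h => not_self_inNbr_E5 j (h ▸ hi)
    have := hcond i (Finset.mem_insert_of_mem hi)
    rwa [Function.update_of_ne hij] at this
  have hcx := hdet z x hpz hx hzx
  rw [hzj] at hcx
  unfold stratOf
  exact hcx

lemma mem_correctSet (g : V → (V → A) → A) (x : V → A) :
    x ∈ correctSet g ↔ ∀ j, g j x = x j := by
  unfold correctSet
  simp

/-- the uniform distribution on a finite set of assignments -/
noncomputable def unif (F : Finset (V → A)) : (V → A) → ℝ :=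
  fun x => if x ∈ F then ((F.card : ℝ))⁻¹ else 0

lemma unif_prob {F : Finset (V → A)} (hF : F.Nonempty) : IsProbDist (unif F) := by
  constructor
  · intro x
    unfold unif
    split <;> positivity
  · unfold unif
    rw [Finset.sum_ite_mem, Finset.univ_inter, Finset.sum_const, nsmul_eq_mul]
    rw [mul_inv_cancel₀]
    exact_mod_cast Finset.card_ne_zero_of_mem hF.choose_spec

lemma unif_ne_zero_iff {F : Finset (V → A)} (hF : F.Nonempty) (x : V → A) :
    unif F x ≠ 0 ↔ x ∈ F := by
  unfold unif
  have hcard : ((F.card : ℝ)) ≠ 0 := by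
    exact_mod_cast Finset.card_ne_zero_of_mem hF.choose_spec
  split
  case isTrue h => simp only [ne_eq, inv_eq_zero]; exact ⟨fun _ => h, fun _ => hcard⟩
  case isFalse h => exact ⟨fun h' => absurd rfl h', fun hx => absurd hx h⟩

lemma fent_unif_univ {F : Finset (V → A)} (hF : F.Nonempty) :
    fent (unif F) (Finset.univ : Finset V) = Real.log F.card := by
  have hcard : ((F.card : ℝ)) ≠ 0 := by
    exact_mod_cast Finset.card_ne_zero_of_mem hF.choose_spec
  unfold fent
  have hterm : ∀ x : V → A, unif F x * Real.log (q (unif F) (Finset.univ : Finset V) x)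
      = if x ∈ F then ((F.card : ℝ))⁻¹ * Real.log ((F.card : ℝ))⁻¹ else 0 := by
    intro x
    rw [q_univ]
    unfold unif
    split <;> simp
  rw [Finset.sum_congr rfl (fun x _ => hterm x)]
  rw [Finset.sum_ite_mem, Finset.univ_inter, Finset.sum_const, nsmul_eq_mul]
  rw [← mul_assoc, mul_inv_cancel₀ hcard, one_mul, Real.log_inv, neg_neg]

end PentagonProof
namespace PentagonProof

variable {s : ℕ}

lemma strategySet_bddAbove (s : ℕ) :
    BddAbove {m : ℕ | ∃ g : Fin 5 → (Fin 5 → Fin s) → Fin s,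
      IsStrategy E5 g ∧ m = (correctSet g).card} := by
  refine ⟨s ^ 5, ?_⟩
  rintro m ⟨g, hg, rfl⟩
  calc (correctSet g).card ≤ (Finset.univ : Finset (Fin 5 → Fin s)).card :=
        Finset.card_le_univ _
    _ = s ^ 5 := by
        rw [Finset.card_univ, Fintype.card_fun, Fintype.card_fin, Fintype.card_fin]

lemma strategySet_nonempty (s : ℕ) [NeZero s] :
    {m : ℕ | ∃ g : Fin 5 → (Fin 5 → Fin s) → Fin s,
      IsStrategy E5 g ∧ m = (correctSet g).card}.Nonempty :=
  ⟨(correctSet (fun (_ : Fin 5) (_ : Fin 5 → Fin s) => (0 : Fin s))).card,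
    ⟨fun _ _ => (0 : Fin s), fun _ _ _ _ => rfl, rfl⟩⟩

lemma card_le_maxCorrect {g : Fin 5 → (Fin 5 → Fin s) → Fin s} (hg : IsStrategy E5 g) :
    (correctSet g).card ≤ maxCorrect E5 s :=
  le_csSup (strategySet_bddAbove s) ⟨g, hg, rfl⟩

lemma maxCorrect_mem (s : ℕ) [NeZero s] :
    ∃ g : Fin 5 → (Fin 5 → Fin s) → Fin s,
      IsStrategy E5 g ∧ maxCorrect E5 s = (correctSet g).card :=
  Nat.sSup_mem (strategySet_nonempty s) (strategySet_bddAbove s)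

lemma maxCorrect_pos (s : ℕ) [NeZero s] : 1 ≤ maxCorrect E5 s := by
  have hmem : (fun _ : Fin 5 => (0 : Fin s)) ∈
      correctSet (fun (_ : Fin 5) (_ : Fin 5 → Fin s) => (0 : Fin s)) :=
    (mem_correctSet _ _).mpr (fun _ => rfl)
  calc 1 ≤ (correctSet (fun (_ : Fin 5) (_ : Fin 5 → Fin s) => (0 : Fin s))).card :=
        Finset.card_pos.mpr ⟨_, hmem⟩
    _ ≤ maxCorrect E5 s := card_le_maxCorrect (fun _ _ _ _ => rfl)

lemma log_s_pos (hs : 2 ≤ s) : 0 < Real.log s :=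
  Real.log_pos (by exact_mod_cast lt_of_lt_of_le one_lt_two (by exact_mod_cast hs))

/-- support bound: entropy is at most `log_s` of the guessing capacity -/
lemma hent_le_logb (hs : 2 ≤ s) (p : (Fin 5 → Fin s) → ℝ)
    (hp : IsProbDist p) (hc : InfoConstraints E5 s p) :
    Hent s p Finset.univ ≤ Real.logb s (maxCorrect E5 s) := by
  haveI : NeZero s := ⟨by omega⟩
  haveI : Nonempty (Fin s) := ⟨0⟩
  have hlogs := log_s_pos hs
  set F : Finset (Fin 5 → Fin s) := Finset.univ.filter (fun x => p x ≠ 0) with hF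
  have hFsub : F ⊆ correctSet (stratOf p) := by
    intro x hx
    exact (mem_correctSet _ _).mpr
      (fun j => stratOf_correct hs hp hc x (Finset.mem_filter.mp hx).2 j)
  have hFpos : 0 < F.card := by
    have hsum : ∑ x : Fin 5 → Fin s, p x ≠ 0 := by rw [hp.2]; exact one_ne_zero
    obtain ⟨x, -, hx⟩ := Finset.exists_ne_zero_of_sum_ne_zero hsum
    exact Finset.card_pos.mpr ⟨x, Finset.mem_filter.mpr ⟨Finset.mem_univ _, hx⟩⟩
  have hcardle : F.card ≤ maxCorrect E5 s :=
    le_trans (Finset.card_le_card hFsub) (card_le_maxCorrect (stratOf_isStrategy p))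
  have h1 : fent p Finset.univ ≤ Real.log (F.card) := by
    rw [fent_univ_eq]
    exact sum_negMulLog_le p hp.1 hp.2 F (fun x hx => Finset.mem_filter.mpr ⟨Finset.mem_univ _, hx⟩)
  have h2 : Real.log (F.card) ≤ Real.log (maxCorrect E5 s) := by
    apply Real.log_le_log (by exact_mod_cast hFpos)
    exact_mod_cast hcardle
  rw [hent_eq s p, Real.logb]
  exact (div_le_div_iff_of_pos_right hlogs).mpr (h1.trans h2)

lemma maxCorrect_sq_le (hs : 2 ≤ s) : (maxCorrect E5 s) ^ 2 ≤ s ^ 5 := by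
  haveI : NeZero s := ⟨by omega⟩
  haveI : Nonempty (Fin s) := ⟨0⟩
  have hlogs := log_s_pos hs
  obtain ⟨g, hg, hm⟩ := maxCorrect_mem s
  have hFne : (correctSet g).Nonempty := by
    rw [← Finset.card_pos, ← hm]
    exact maxCorrect_pos s
  have hdet : ∀ j : Fin 5, ∀ x y : Fin 5 → Fin s, unif (correctSet g) x ≠ 0 →
      unif (correctSet g) y ≠ 0 → (∀ i ∈ inNbr E5 j, x i = y i) → x j = y j := by
    intro j x y hx hy hagree
    rw [unif_ne_zero_iff hFne] at hx hy
    have hxj : g j x = x j := (mem_correctSet _ _).mp hx j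
    have hyj : g j y = y j := (mem_correctSet _ _).mp hy j
    have hgxy : g j x = g j y := hg j x y (fun i hEij =>
      hagree i (by simp only [inNbr, Finset.mem_filter]; exact ⟨Finset.mem_univ _, hEij⟩))
    rw [← hxj, ← hyj, hgxy]
  have hprob := unif_prob hFne
  have hcons := infoConstraints_of_det (E := E5) s hprob hdet
  have hHent := hent_le_five_half hs _ hprob hcons
  rw [hent_eq s _, fent_unif_univ hFne, div_le_iff₀ hlogs] at hHent
  have hlog2 : Real.log (((correctSet g).card : ℝ) ^ 2) ≤ Real.log ((s : ℝ) ^ 5) := by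
    rw [Real.log_pow, Real.log_pow]
    push_cast
    linarith
  have hcpos : (0 : ℝ) < ((correctSet g).card : ℝ) := by
    exact_mod_cast Finset.card_pos.mpr hFne
  have hle : (((correctSet g).card : ℝ)) ^ 2 ≤ ((s : ℝ)) ^ 5 :=
    (Real.log_le_log_iff (by positivity) (by positivity)).mp hlog2
  rw [hm]
  exact_mod_cast hle

end PentagonProof
namespace PentagonProof

variable {V A : Type*} [Fintype V] [DecidableEq V] [Fintype A] [DecidableEq A]
variable {s : ℕ}

/-- a point mass distribution -/
noncomputable def pointMass (x₀ : V → A) : (V → A) → ℝ := fun x => if x = x₀ then 1 else 0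

lemma pointMass_prob (x₀ : V → A) : IsProbDist (pointMass x₀) := by
  constructor
  · intro x; unfold pointMass; split <;> norm_num
  · unfold pointMass
    rw [Finset.sum_ite_eq' Finset.univ x₀ (fun _ => (1 : ℝ))]
    simp

lemma pointMass_supp {x₀ x : V → A} (h : pointMass x₀ x ≠ 0) : x = x₀ := by
  by_contra hne
  exact h (if_neg hne)

lemma graphEntropySet_nonempty (hs : 2 ≤ s) :
    {h : ℝ | ∃ p : (Fin 5 → Fin s) → ℝ,
      IsProbDist p ∧ InfoConstraints E5 s p ∧ h = Hent s p Finset.univ}.Nonempty := by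
  haveI : NeZero s := ⟨by omega⟩
  haveI : Nonempty (Fin s) := ⟨0⟩
  set x₀ : Fin 5 → Fin s := fun _ => 0 with hx₀
  refine ⟨Hent s (pointMass x₀) Finset.univ, pointMass x₀, pointMass_prob x₀, ?_, rfl⟩
  apply infoConstraints_of_det (E := E5) s (pointMass_prob x₀)
  intro j x y hx hy _
  rw [pointMass_supp hx, pointMass_supp hy]

lemma graphEntropy_le_five_half (hs : 2 ≤ s) : graphEntropy E5 s ≤ 5 / 2 := by
  apply csSup_le (graphEntropySet_nonempty hs)
  rintro h ⟨p, hp, hc, rfl⟩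
  exact hent_le_five_half hs p hp hc

lemma graphEntropy_bddAbove (hs : 2 ≤ s) :
    BddAbove {h : ℝ | ∃ p : (Fin 5 → Fin s) → ℝ,
      IsProbDist p ∧ InfoConstraints E5 s p ∧ h = Hent s p Finset.univ} := by
  refine ⟨5 / 2, ?_⟩
  rintro h ⟨p, hp, hc, rfl⟩
  exact hent_le_five_half hs p hp hc

lemma graphEntropy_le_logb (hs : 2 ≤ s) :
    graphEntropy E5 s ≤ Real.logb s (maxCorrect E5 s) := by
  apply csSup_le (graphEntropySet_nonempty hs)
  rintro h ⟨p, hp, hc, rfl⟩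
  exact hent_le_logb hs p hp hc

/-- the fixed-point construction over a square alphabet -/
lemma graphEntropy_square (t : ℕ) (ht : 2 ≤ t) : graphEntropy E5 (t ^ 2) = 5 / 2 := by
  have hs : 2 ≤ t ^ 2 := by nlinarith
  haveI : Nonempty (Fin t) := ⟨⟨0, by omega⟩⟩
  haveI : Nonempty (Fin (t ^ 2)) := ⟨⟨0, by positivity⟩⟩
  apply le_antisymm (graphEntropy_le_five_half hs)
  -- build the distribution
  set e : Fin t × Fin t ≃ Fin (t ^ 2) :=
    finProdFinEquiv.trans (finCongr (by ring)) with he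
  set X : (Fin 5 → Fin t) → (Fin 5 → Fin (t ^ 2)) :=
    fun a j => e (a (j - 1), a j) with hX
  have hXinj : Function.Injective X := by
    intro a b hab
    funext j
    have h := e.injective (congrFun hab j)
    exact (Prod.mk.injEq _ _ _ _).mp h |>.2
  set F₀ : Finset (Fin 5 → Fin (t ^ 2)) := Finset.univ.image X with hF₀
  have hFne : F₀.Nonempty := Finset.Nonempty.image Finset.univ_nonempty _
  have hcard : F₀.card = t ^ 5 := by
    rw [hF₀, Finset.card_image_of_injective _ hXinj, Finset.card_univ, Fintype.card_fun,
      Fintype.card_fin, Fintype.card_fin]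
  have hnbr : ∀ j : Fin 5, (j + 1) ∈ inNbr E5 j ∧ (j - 1) ∈ inNbr E5 j := by decide
  have hdet : ∀ j : Fin 5, ∀ x y : Fin 5 → Fin (t ^ 2), unif F₀ x ≠ 0 →
      unif F₀ y ≠ 0 → (∀ i ∈ inNbr E5 j, x i = y i) → x j = y j := by
    intro j x y hx hy hagree
    rw [unif_ne_zero_iff hFne] at hx hy
    obtain ⟨a, -, rfl⟩ := Finset.mem_image.mp hx
    obtain ⟨b, -, rfl⟩ := Finset.mem_image.mp hy
    have h1 : X a (j + 1) = X b (j + 1) := hagree _ (hnbr j).1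
    have h2 : X a (j - 1) = X b (j - 1) := hagree _ (hnbr j).2
    rw [hX] at h1 h2 ⊢
    dsimp only at h1 h2 ⊢
    have e1 := (Prod.mk.injEq _ _ _ _).mp (e.injective h1)
    have e2 := (Prod.mk.injEq _ _ _ _).mp (e.injective h2)
    rw [add_sub_cancel_right] at e1
    rw [e1.1, e2.2]
  have hprob := unif_prob hFne
  have hcons := infoConstraints_of_det (E := E5) (t ^ 2) hprob hdet
  have hval : Hent (t ^ 2) (unif F₀) Finset.univ = 5 / 2 := by
    have hlogt : 0 < Real.log t :=
      Real.log_pos (by exact_mod_cast lt_of_lt_of_le one_lt_two (by exact_mod_cast ht))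
    rw [hent_eq (t ^ 2) (unif F₀), fent_unif_univ hFne, hcard]
    rw [Nat.cast_pow, Nat.cast_pow, Real.log_pow, Real.log_pow]
    have hden : ((5:ℕ):ℝ) * Real.log t ≠ 0 ∧ ((2:ℕ):ℝ) * Real.log t ≠ 0 := by
      constructor <;> positivity
    rw [div_eq_div_iff hden.2 (by norm_num : (2:ℝ) ≠ 0)]
    push_cast
    ring
  apply le_csSup (graphEntropy_bddAbove hs)
  exact ⟨unif F₀, hprob, hcons, hval.symm⟩

/-- number theory: if `m² = s⁵` then `s` is a perfect square -/
lemma square_of_sq_eq_pow5 {s m : ℕ} (hs : 1 ≤ s) (h : m ^ 2 = s ^ 5) : ∃ t, s = t ^ 2 := by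
  have h4 : (s ^ 2) ^ 2 ∣ m ^ 2 := by
    rw [h, ← pow_mul]
    exact pow_dvd_pow s (by norm_num)
  have hdvd : s ^ 2 ∣ m := (Nat.pow_dvd_pow_iff two_ne_zero).mp h4
  obtain ⟨k, hk⟩ := hdvd
  refine ⟨k, ?_⟩
  have h5 : s ^ 4 * k ^ 2 = s ^ 4 * s := by
    have : (s ^ 2 * k) ^ 2 = s ^ 5 := by rw [← hk]; exact h
    nlinarith [this]
  have h6 : k ^ 2 = s := Nat.eq_of_mul_eq_mul_left (by positivity) h5
  exact h6.symm

end PentagonProof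
open PentagonProof in
/-- For every integer `s ≥ 2`, the entropy `E(C5,s)` of the bidirected
pentagon equals `5/2` iff `s` is a perfect square; consequently `E(C5) = 5/2`. -/
theorem pentagon_entropy_eq_iff_square :
    (∀ s : ℕ, 2 ≤ s → (graphEntropy E5 s = 5 / 2 ↔ ∃ t : ℕ, s = t ^ 2))
    ∧ genEntropy E5 = 5 / 2 := by
  have key : ∀ s : ℕ, 2 ≤ s → (graphEntropy E5 s = 5 / 2 ↔ ∃ t : ℕ, s = t ^ 2) := by
    intro s hs
    constructor
    · intro hEq
      by_contra hns
      haveI : NeZero s := ⟨by omega⟩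
      have h1 : (maxCorrect E5 s) ^ 2 ≤ s ^ 5 := maxCorrect_sq_le hs
      have h2 : (maxCorrect E5 s) ^ 2 ≠ s ^ 5 := fun h =>
        hns (square_of_sq_eq_pow5 (by omega) h)
      have h3 : (maxCorrect E5 s) ^ 2 < s ^ 5 := lt_of_le_of_ne h1 h2
      have hm1 : 1 ≤ maxCorrect E5 s := maxCorrect_pos s
      have hmpos : (0 : ℝ) < (maxCorrect E5 s : ℝ) := by exact_mod_cast hm1
      have hlogs := log_s_pos hs
      have hlt : Real.logb s (maxCorrect E5 s) < 5 / 2 := by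
        rw [Real.logb, div_lt_iff₀ hlogs]
        have hloglt : Real.log ((maxCorrect E5 s : ℝ) ^ 2) < Real.log ((s : ℝ) ^ 5) := by
          apply Real.log_lt_log (pow_pos hmpos 2)
          exact_mod_cast h3
        rw [Real.log_pow, Real.log_pow] at hloglt
        push_cast at hloglt
        linarith
      have hle := graphEntropy_le_logb hs
      rw [hEq] at hle
      linarith
    · rintro ⟨t, rfl⟩
      have ht : 2 ≤ t := by
        by_contra hlt
        push_neg at hlt
        interval_cases t <;> norm_num at hs
      exact graphEntropy_square t ht
  refine ⟨key, ?_⟩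
  have hmem : (5 / 2 : ℝ) ∈ {h : ℝ | ∃ s : ℕ, 2 ≤ s ∧ h = graphEntropy E5 s} :=
    ⟨4, by norm_num, ((key 4 (by norm_num)).mpr ⟨2, by norm_num⟩).symm⟩
  have hub : ∀ h ∈ {h : ℝ | ∃ s : ℕ, 2 ≤ s ∧ h = graphEntropy E5 s}, h ≤ 5 / 2 := by
    rintro h ⟨s, hs, rfl⟩
    exact graphEntropy_le_five_half hs
  exact IsGreatest.csSup_eq ⟨hmem, hub⟩
end
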